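/- arXiv:1410.6601 — 6 statements merged into one kernel-verified Lean document; each statement's English description precedes it below -/
import Mathlib

section
/- If Δ is a Boolean cell complex, then the f-polynomial of its barycentric subdivision equals E applied to the f-polynomial of Δ, where E is the linear operator on polynomials defined by E(binom(x,k)) = x^k; equivalently, E(x^n) = Σ_{k=1}^n k!·S(n,k)·x^k for n ≥ 1. -/
open Polynomial Finset Function

namespace BarySub

noncomputable def D (n k : ℕ) : ℕ := Nat.card {g : Fin n → Fin k // Function.Surjective g}

lemma D_eq_zero {n k : ℕ} (h : n < k) : D n k = 0 := by
  rw [D, Nat.card_eq_zero]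
  left
  constructor
  rintro ⟨g, hg⟩
  have := Fintype.card_le_of_surjective g hg
  simp only [Fintype.card_fin] at this
  omega

lemma card_surj_congr {α β γ : Type*} (e : α ≃ β) :
    Nat.card {g : γ → α // Surjective g} = Nat.card {g : γ → β // Surjective g} :=
  Nat.card_congr
    ⟨fun g => ⟨e ∘ g.1, e.surjective.comp g.2⟩,
     fun g => ⟨e.symm ∘ g.1, e.symm.surjective.comp g.2⟩,
     fun g => by ext x; simp, fun g => by ext x; simp⟩

lemma nat_card_sigma {ι : Type*} [Fintype ι] (T : ι → Type*) [∀ i, Finite (T i)] :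
    Nat.card (Σ i, T i) = ∑ i, Nat.card (T i) := by
  letI : ∀ i, Fintype (T i) := fun i => Fintype.ofFinite _
  simp [Nat.card_eq_fintype_card, Fintype.card_sigma]

lemma mem_iff_lt_card {k : ℕ} (s : Finset (Fin k))
    (hdc : ∀ i j : Fin k, i ≤ j → j ∈ s → i ∈ s) (j : Fin k) :
    j ∈ s ↔ (j : ℕ) < s.card := by
  constructor
  · intro hj
    have hsub : Finset.Iic j ⊆ s := fun i hi => hdc i j (Finset.mem_Iic.mp hi) hj
    have := Finset.card_le_card hsub
    rw [Fin.card_Iic] at this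
    omega
  · intro hj
    by_contra hjs
    have hsub : s ⊆ Finset.Iio j := by
      intro i hi
      rw [Finset.mem_Iio]
      by_contra hij
      exact hjs (hdc j i (le_of_not_gt hij) hi)
    have := Finset.card_le_card hsub
    rw [Fin.card_Iio] at this
    omega

lemma card_pinned_chains (n k : ℕ) :
    Nat.card {c : Fin (k+1) → Finset (Fin n) //
        StrictMono c ∧ c 0 = ∅ ∧ c (Fin.last k) = Finset.univ} = D n k := by
  classical
  rw [D]
  refine (Nat.card_congr (Equiv.ofBijective
    (fun g : {g : Fin n → Fin k // Surjective g} =>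
      (⟨fun j => Finset.univ.filter (fun x => (g.1 x : ℕ) < (j : ℕ)), ?_, ?_, ?_⟩ :
        {c : Fin (k+1) → Finset (Fin n) //
          StrictMono c ∧ c 0 = ∅ ∧ c (Fin.last k) = Finset.univ})) ?_)).symm
  · -- StrictMono
    intro j j' hj
    have hjj' : (j : ℕ) < (j' : ℕ) := hj
    constructor
    · intro x hx
      simp only [Finset.mem_filter, Finset.mem_univ, true_and] at hx ⊢
      omega
    · intro hsub
      have hjk : (j : ℕ) < k := lt_of_lt_of_le hjj' (Fin.is_le j')
      obtain ⟨x, hx⟩ := g.2 ⟨(j : ℕ), hjk⟩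
      have hx' : x ∈ Finset.univ.filter (fun x => (g.1 x : ℕ) < (j' : ℕ)) := by
        simp [hx]; omega
      have := hsub hx'
      simp [hx] at this
  · ext x; simp
  · ext x
    simp only [Finset.mem_filter, Finset.mem_univ, true_and, iff_true, Fin.val_last]
    exact (g.1 x).isLt
  · constructor
    · -- injective
      intro g g' hgg'
      simp only [Subtype.mk.injEq] at hgg'
      ext x
      have h1 := congrFun hgg' (g.1 x).succ
      have h2 := congrFun hgg' (g'.1 x).succ
      have hx1 : x ∈ Finset.univ.filter (fun y => (g.1 y : ℕ) < ((g.1 x).succ : ℕ)) := by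
        simp [Fin.val_succ]
      have hx2 : x ∈ Finset.univ.filter (fun y => (g'.1 y : ℕ) < ((g'.1 x).succ : ℕ)) := by
        simp [Fin.val_succ]
      rw [h1] at hx1
      rw [← h2] at hx2
      simp only [Finset.mem_filter, Finset.mem_univ, true_and, Fin.val_succ] at hx1 hx2
      omega
    · -- surjective
      rintro ⟨c, hSM, hc0, hck⟩
      set S : Fin n → Finset (Fin k) :=
        fun x => Finset.univ.filter (fun j : Fin k => x ∉ c j.succ) with hS
      have hdc : ∀ x, ∀ i j : Fin k, i ≤ j → j ∈ S x → i ∈ S x := by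
        intro x i j hij hj
        simp only [hS, Finset.mem_filter, Finset.mem_univ, true_and] at hj ⊢
        intro hmem
        exact hj (hSM.monotone (by exact Fin.succ_le_succ_iff.mpr hij) hmem)
      have hlt : ∀ x, (S x).card < k := by
        intro x
        have hne : S x ≠ Finset.univ := by
          intro h
          have hxn : x ∈ c (Fin.last k) := by rw [hck]; exact Finset.mem_univ x
          rcases Fin.eq_zero_or_eq_succ (Fin.last k) with h0 | ⟨j', hj'⟩
          · rw [h0, hc0] at hxn; exact absurd hxn (Finset.notMem_empty x)
          · have : j' ∈ S x := by rw [h]; exact Finset.mem_univ j'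
            simp only [hS, Finset.mem_filter, Finset.mem_univ, true_and] at this
            rw [hj'] at hxn
            exact this hxn
        have : S x ⊂ Finset.univ := (Finset.subset_univ _).ssubset_of_ne hne
        have := Finset.card_lt_card this
        simpa using this
      -- key lemma L
      have L : ∀ (j : Fin (k+1)) (x : Fin n), x ∈ c j ↔ (S x).card < (j : ℕ) := by
        intro j x
        rcases Fin.eq_zero_or_eq_succ j with rfl | ⟨j', rfl⟩
        · simp [hc0]
        · have hmem := mem_iff_lt_card (S x) (hdc x) j'
          have hmem' : j' ∈ S x ↔ x ∉ c j'.succ := by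
            simp [hS]
          rw [hmem'] at hmem
          simp only [Fin.val_succ]
          constructor
          · intro hx
            have : ¬ ((j' : ℕ) < (S x).card) := fun h => (hmem.mpr h) hx
            omega
          · intro h
            by_contra hx
            have := hmem.mp hx
            omega
      refine ⟨⟨fun x => ⟨(S x).card, hlt x⟩, ?_⟩, ?_⟩
      · -- surjectivity of g
        intro v
        obtain ⟨x, hx1, hx2⟩ := Finset.exists_of_ssubset (hSM (Fin.castSucc_lt_succ : v.castSucc < v.succ))
        have h1 := (L v.succ x).mp hx1
        have h2 : ¬ (S x).card < (v.castSucc : ℕ) := fun h => hx2 ((L v.castSucc x).mpr h)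
        simp only [Fin.val_succ, Fin.coe_castSucc] at h1 h2
        refine ⟨x, Fin.ext ?_⟩
        show (S x).card = (v : ℕ)
        omega
      · -- fromSurj g = c
        apply Subtype.ext
        funext j
        ext x
        simp only [Finset.mem_filter, Finset.mem_univ, true_and]
        exact (L j x).symm




lemma pow_eq_sum_D_choose (n m N : ℕ) (hn : n ≤ N) :
    m ^ n = ∑ k ∈ Finset.range (N + 1), D n k * m.choose k := by
  classical
  have e1 : (Fin n → Fin m) ≃
      Σ s : Finset (Fin m), {f : Fin n → Fin m // Finset.image f Finset.univ = s} :=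
    (Equiv.sigmaFiberEquiv _).symm
  have e2 : ∀ s : Finset (Fin m),
      {f : Fin n → Fin m // Finset.image f Finset.univ = s} ≃
        {g : Fin n → {x // x ∈ s} // Surjective g} := by
    intro s
    refine ⟨fun f => ⟨fun x => ⟨f.1 x, ?_⟩, ?_⟩, fun g => ⟨fun x => (g.1 x).1, ?_⟩, ?_, ?_⟩
    · have h := Finset.mem_image_of_mem f.1 (Finset.mem_univ x)
      rwa [f.2] at h
    · rintro ⟨y, hy⟩
      rw [← f.2] at hy
      obtain ⟨x, -, hx⟩ := Finset.mem_image.mp hy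
      exact ⟨x, Subtype.ext hx⟩
    · ext y
      simp only [Finset.mem_image, Finset.mem_univ, true_and]
      constructor
      · rintro ⟨x, rfl⟩; exact (g.1 x).2
      · intro hy
        obtain ⟨x, hx⟩ := g.2 ⟨y, hy⟩
        exact ⟨x, congrArg Subtype.val hx⟩
    · intro f; ext x; rfl
    · intro g; ext x; rfl
  have hcard : m ^ n = ∑ s : Finset (Fin m), D n s.card := by
    have h0 : m ^ n = Nat.card (Fin n → Fin m) := by
      simp [Nat.card_eq_fintype_card]
    rw [h0, Nat.card_congr e1, nat_card_sigma]
    refine Finset.sum_congr rfl fun s _ => ?_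
    rw [Nat.card_congr (e2 s), card_surj_congr s.equivFin, D]
  rw [hcard]
  have h2 : ∑ s : Finset (Fin m), D n s.card
      = ∑ k ∈ Finset.range (m + 1), m.choose k * D n k := by
    rw [← Finset.sum_fiberwise_of_maps_to
      (g := fun s : Finset (Fin m) => s.card) (t := Finset.range (m + 1))
      (fun s _ => Finset.mem_range.mpr (Nat.lt_succ_of_le (by
        simpa using Finset.card_le_card (Finset.subset_univ s))))]
    refine Finset.sum_congr rfl fun k _ => ?_
    rw [Finset.sum_congr rfl (fun s hs => by
      rw [(Finset.mem_filter.mp hs).2]), Finset.sum_const, smul_eq_mul]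
    congr 1
    have h := Fintype.card_finset_len (α := Fin m) k
    rw [Fintype.card_subtype, Fintype.card_fin] at h
    exact h
  rw [h2]
  -- now adjust ranges
  set M := max m N with hM
  have hA : ∑ k ∈ Finset.range (m + 1), m.choose k * D n k
      = ∑ k ∈ Finset.range (M + 1), m.choose k * D n k := by
    refine Finset.sum_subset (Finset.range_subset_range.mpr (by omega)) ?_
    intro k _ hk
    rw [Finset.mem_range, not_lt] at hk
    rw [Nat.choose_eq_zero_of_lt (by omega), zero_mul]
  have hB : ∑ k ∈ Finset.range (N + 1), D n k * m.choose k
      = ∑ k ∈ Finset.range (M + 1), D n k * m.choose k := by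
    refine Finset.sum_subset (Finset.range_subset_range.mpr (by omega)) ?_
    intro k _ hk
    rw [Finset.mem_range, not_lt] at hk
    rw [D_eq_zero (by omega), zero_mul]
  rw [hA, hB]
  exact Finset.sum_congr rfl fun k _ => (mul_comm _ _)



lemma cast_descFactorial_eq (m k : ℕ) :
    ((m.descFactorial k : ℝ)) = ∏ i ∈ Finset.range k, ((m : ℝ) - i) := by
  induction k with
  | zero => simp
  | succ k ih =>
    rw [Finset.prod_range_succ, ← ih, Nat.descFactorial_succ]
    rcases le_or_gt k m with h | h
    · rw [Nat.cast_mul, Nat.cast_sub h]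
      ring
    · have h1 : m.descFactorial k = 0 := Nat.descFactorial_eq_zero_iff_lt.mpr h
      simp [h1]

lemma X_pow_eq_sum (n N : ℕ) (hn : n ≤ N) :
    (X : ℝ[X]) ^ n = ∑ k ∈ Finset.range (N + 1),
      ((D n k : ℝ)) • ((k.factorial : ℝ)⁻¹ • ∏ i ∈ Finset.range k, (X - C (i : ℝ))) := by
  set q : ℝ[X] := (X : ℝ[X]) ^ n - ∑ k ∈ Finset.range (N + 1),
      ((D n k : ℝ)) • ((k.factorial : ℝ)⁻¹ • ∏ i ∈ Finset.range k, (X - C (i : ℝ))) with hq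
  have hroot : ∀ m : ℕ, IsRoot q (m : ℝ) := by
    intro m
    have heval : ∀ k : ℕ,
        eval (m : ℝ) (∏ i ∈ Finset.range k, (X - C (i : ℝ)))
          = (k.factorial : ℝ) * (m.choose k : ℝ) := by
      intro k
      rw [eval_prod]
      simp only [eval_sub, eval_X, eval_C]
      rw [← cast_descFactorial_eq, Nat.descFactorial_eq_factorial_mul_choose]
      push_cast
      ring
    have hsum := pow_eq_sum_D_choose n m N hn
    rw [IsRoot, hq]
    rw [eval_sub, eval_pow, eval_X, eval_finset_sum]
    have : ∀ k ∈ Finset.range (N + 1),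
        eval (m : ℝ) (((D n k : ℝ)) • ((k.factorial : ℝ)⁻¹ •
          ∏ i ∈ Finset.range k, (X - C (i : ℝ))))
        = (D n k : ℝ) * (m.choose k : ℝ) := by
      intro k _
      rw [eval_smul, eval_smul, heval k, smul_eq_mul, smul_eq_mul]
      field_simp
    rw [Finset.sum_congr rfl this]
    rw [sub_eq_zero]
    have := congrArg (fun t : ℕ => (t : ℝ)) hsum
    push_cast at this
    exact this
  have hq0 : q = 0 := by
    apply eq_zero_of_infinite_isRoot
    apply Set.infinite_of_injective_forall_mem (f := fun m : ℕ => (m : ℝ))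
      Nat.cast_injective
    exact hroot
  have := sub_eq_zero.mp (hq ▸ hq0)
  exact this



lemma strictMono_cons {P : Type*} [PartialOrder P] [OrderBot P] {k : ℕ} {c : Fin k → P}
    (hc : StrictMono c) (h : ∀ i, c i ≠ ⊥) :
    StrictMono (Fin.cons ⊥ c : Fin (k+1) → P) := by
  cases k with
  | zero =>
    intro a b hab
    have ha := a.isLt
    have hb := b.isLt
    have : a = b := Fin.ext (by omega)
    rw [this] at hab
    exact absurd hab (lt_irrefl _)
  | succ k =>
    rw [Fin.strictMono_iff_lt_succ]
    intro i
    induction i using Fin.cases with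
    | zero =>
      rw [Fin.castSucc_zero, Fin.cons_zero, Fin.cons_succ]
      exact (h 0).bot_lt
    | succ j =>
      rw [← Fin.succ_castSucc, Fin.cons_succ, Fin.cons_succ]
      exact hc (Fin.castSucc_lt_succ : j.castSucc < j.succ)

lemma count_chains (P : Type) [Fintype P] [PartialOrder P] [OrderBot P]
    (rk : P → ℕ)
    (hbool : ∀ F : P, Nonempty ((Set.Icc (⊥ : P) F) ≃o Finset (Fin (rk F)))) (k : ℕ) :
    Nat.card {c : Fin k → P // StrictMono c ∧ ∀ i, c i ≠ ⊥} = ∑ F : P, D (rk F) k := by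
  classical
  have e1 : {c : Fin k → P // StrictMono c ∧ ∀ i, c i ≠ ⊥} ≃
      {d : Fin (k+1) → P // StrictMono d ∧ d 0 = ⊥} := by
    refine ⟨fun c => ⟨Fin.cons ⊥ c.1, strictMono_cons c.2.1 c.2.2, Fin.cons_zero _ _⟩,
      fun d => ⟨fun i => d.1 i.succ, fun i j hij => d.2.1 (Fin.succ_lt_succ_iff.mpr hij), ?_⟩,
      ?_, ?_⟩
    · intro i
      have : d.1 0 < d.1 i.succ := d.2.1 (Fin.succ_pos i)
      rw [d.2.2] at this
      exact this.ne'
    · intro c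
      apply Subtype.ext
      funext i
      simp [Fin.cons_succ]
    · intro d
      apply Subtype.ext
      funext i
      induction i using Fin.cases with
      | zero => simp [d.2.2.symm]
      | succ j => simp [Fin.cons_succ]
  have e2 : {d : Fin (k+1) → P // StrictMono d ∧ d 0 = ⊥} ≃
      Σ F : P, {d : Fin (k+1) → P // StrictMono d ∧ d 0 = ⊥ ∧ d (Fin.last k) = F} := by
    refine ⟨fun d => ⟨d.1 (Fin.last k), ⟨d.1, d.2.1, d.2.2, rfl⟩⟩,
      fun p => ⟨p.2.1, p.2.2.1, p.2.2.2.1⟩, fun d => rfl, ?_⟩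
    rintro ⟨F, d, hSM, h0, rfl⟩
    rfl
  rw [Nat.card_congr (e1.trans e2), nat_card_sigma]
  refine Finset.sum_congr rfl fun F _ => ?_
  obtain ⟨e⟩ := hbool F
  have hbot : e ⟨⊥, Set.left_mem_Icc.mpr bot_le⟩ = ∅ := by
    have h1 : e ⟨⊥, Set.left_mem_Icc.mpr bot_le⟩ ≤ e (e.symm ∅) :=
      e.le_iff_le.mpr (Subtype.coe_le_coe.mp bot_le)
    rw [e.apply_symm_apply] at h1
    exact le_bot_iff.mp h1
  have htop : e ⟨F, Set.right_mem_Icc.mpr bot_le⟩ = Finset.univ := by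
    have h1 : e (e.symm Finset.univ) ≤ e ⟨F, Set.right_mem_Icc.mpr bot_le⟩ :=
      e.le_iff_le.mpr (Subtype.coe_le_coe.mp (e.symm Finset.univ).2.2)
    rw [e.apply_symm_apply] at h1
    exact le_antisymm le_top h1
  have e3 : {d : Fin (k+1) → P // StrictMono d ∧ d 0 = ⊥ ∧ d (Fin.last k) = F} ≃
      {c : Fin (k+1) → Finset (Fin (rk F)) //
        StrictMono c ∧ c 0 = ∅ ∧ c (Fin.last k) = Finset.univ} := by
    refine ⟨fun d => ⟨fun j => e ⟨d.1 j, ?_, ?_⟩, ?_, ?_, ?_⟩,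
      fun c => ⟨fun j => (e.symm (c.1 j)).1, ?_, ?_, ?_⟩, ?_, ?_⟩
    · exact bot_le
    · calc d.1 j ≤ d.1 (Fin.last k) := d.2.1.monotone (Fin.le_last j)
        _ = F := d.2.2.2
    · intro i j hij
      rw [e.lt_iff_lt]
      exact Subtype.mk_lt_mk.mpr (d.2.1 hij)
    · rw [← hbot]
      exact congrArg e (Subtype.ext d.2.2.1)
    · rw [← htop]
      exact congrArg e (Subtype.ext d.2.2.2)
    · intro i j hij
      have : e.symm (c.1 i) < e.symm (c.1 j) := by
        rw [e.symm.lt_iff_lt]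
        exact c.2.1 hij
      exact this
    · show (e.symm (c.1 0) : P) = ⊥
      rw [c.2.2.1, ← hbot, e.symm_apply_apply]
    · show (e.symm (c.1 (Fin.last k)) : P) = F
      rw [c.2.2.2, ← htop, e.symm_apply_apply]
    · intro d
      apply Subtype.ext
      funext j
      simp
    · intro c
      apply Subtype.ext
      funext j
      simp
      exact e.apply_symm_apply _
  rw [Nat.card_congr e3, card_pinned_chains]


end BarySub

/-- For a Boolean cell complex — modelled by its face poset `P`, a finite poset with a
bottom element `⊥` (the empty face) in which every lower interval `[⊥, F]` is a Boolean
lattice (of rank `rk F`) — the `f`-polynomial of the barycentric subdivision, whose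
`(k-1)`-faces are the chains `F₁ < ⋯ < F_k` of nonempty faces, equals `E` applied to the
`f`-polynomial of `Δ`, where `E` is the linear operator with `E(binom(x,k)) = x^k`. -/
theorem fpolynomial_barycentric_subdivision
    (P : Type) [Fintype P] [PartialOrder P] [OrderBot P]
    (rk : P → ℕ)
    (hbool : ∀ F : P, Nonempty ((Set.Icc (⊥ : P) F) ≃o Finset (Fin (rk F))))
    (E : Polynomial ℝ →ₗ[ℝ] Polynomial ℝ)
    (hE : ∀ k : ℕ,
      E ((k.factorial : ℝ)⁻¹ • ∏ i ∈ Finset.range k, (X - C (i : ℝ))) = X ^ k) :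
    ∑ k ∈ Finset.range (Fintype.card P + 1),
        C ((Nat.card {c : Fin k → P // StrictMono c ∧ ∀ i, c i ≠ ⊥} : ℕ) : ℝ) * X ^ k =
      E (∑ F : P, X ^ rk F) := by
  classical
  have hrk : ∀ F : P, rk F ≤ Fintype.card P := by
    intro F
    obtain ⟨e⟩ := hbool F
    have h1 : Nat.card (Set.Icc (⊥ : P) F) = 2 ^ rk F := by
      rw [Nat.card_congr e.toEquiv]
      simp [Nat.card_eq_fintype_card]
    have h2 : Nat.card (Set.Icc (⊥ : P) F) ≤ Nat.card P :=
      Nat.card_le_card_of_injective Subtype.val Subtype.coe_injective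
    have h3 : Nat.card P = Fintype.card P := Nat.card_eq_fintype_card
    have h4 : rk F < 2 ^ rk F := Nat.lt_two_pow_self
    omega
  have hL : ∀ k : ℕ, Nat.card {c : Fin k → P // StrictMono c ∧ ∀ i, c i ≠ ⊥}
      = ∑ F : P, BarySub.D (rk F) k := fun k => BarySub.count_chains P rk hbool k
  have hR : ∀ F : P, E (X ^ rk F)
      = ∑ k ∈ Finset.range (Fintype.card P + 1),
          C ((BarySub.D (rk F) k : ℝ)) * X ^ k := by
    intro F
    rw [BarySub.X_pow_eq_sum (rk F) (Fintype.card P) (hrk F), map_sum]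
    refine Finset.sum_congr rfl fun k _ => ?_
    rw [map_smul, hE k, smul_eq_C_mul]
  calc ∑ k ∈ Finset.range (Fintype.card P + 1),
        C ((Nat.card {c : Fin k → P // StrictMono c ∧ ∀ i, c i ≠ ⊥} : ℕ) : ℝ) * X ^ k
      = ∑ k ∈ Finset.range (Fintype.card P + 1),
          ∑ F : P, C ((BarySub.D (rk F) k : ℝ)) * X ^ k := by
        refine Finset.sum_congr rfl fun k _ => ?_
        rw [hL k, Nat.cast_sum, map_sum, Finset.sum_mul]
    _ = ∑ F : P, ∑ k ∈ Finset.range (Fintype.card P + 1),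
          C ((BarySub.D (rk F) k : ℝ)) * X ^ k := Finset.sum_comm
    _ = ∑ F : P, E (X ^ rk F) := Finset.sum_congr rfl fun F _ => (hR F).symm
    _ = E (∑ F : P, X ^ rk F) := (map_sum E _ _).symm
end

section
/- The operator E defined by E(binom(x,k)) = x^k commutes with the involution I(f)(x) = f(-1-x): for every polynomial f, E(f)(-1-x) = E(f(-1-x))(x). -/
open Polynomial

noncomputable def bpoly (k : ℕ) : Polynomial ℝ :=
  (k.factorial : ℝ)⁻¹ • ∏ i ∈ Finset.range k, (X - C (i : ℝ))

lemma prod_eq_desc (k : ℕ) :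
    (∏ i ∈ Finset.range k, (X - C (i : ℝ))) = descPochhammer ℝ k := by
  induction k with
  | zero => simp
  | succ n ih =>
    rw [Finset.prod_range_succ, ih, descPochhammer_succ_right]
    simp [Polynomial.C_eq_natCast]

lemma bpoly_eval_nat (k n : ℕ) : (bpoly k).eval (n : ℝ) = (n.choose k : ℝ) := by
  rw [bpoly, prod_eq_desc]
  rw [Polynomial.eval_smul, smul_eq_mul, descPochhammer_eval_eq_descFactorial,
    Nat.descFactorial_eq_factorial_mul_choose]
  push_cast
  rw [← mul_assoc, inv_mul_cancel₀ (by positivity), one_mul]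

lemma bpoly_eval_neg (k n : ℕ) :
    (bpoly k).eval (-1 - (n : ℝ)) = (-1 : ℝ) ^ k * ((n + k).choose k : ℝ) := by
  rw [bpoly, prod_eq_desc, Polynomial.eval_smul, smul_eq_mul,
    descPochhammer_eval_eq_ascPochhammer]
  have h1 : (-1 - (n : ℝ)) - k + 1 = -((n : ℝ) + k) := by ring
  rw [h1, ascPochhammer_eval_neg_eq_descPochhammer]
  have h2 : ((n : ℝ) + k) = ((n + k : ℕ) : ℝ) := by push_cast; ring
  rw [h2, descPochhammer_eval_eq_descFactorial, Nat.descFactorial_eq_factorial_mul_choose]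
  push_cast
  field_simp

lemma vandermonde' (k n : ℕ) :
    (n + k).choose k = ∑ j ∈ Finset.range (k + 1), k.choose j * n.choose j := by
  rw [Nat.add_choose_eq, Finset.Nat.sum_antidiagonal_eq_sum_range_succ_mk]
  apply Finset.sum_congr rfl
  intro j hj
  rw [Finset.mem_range] at hj
  rw [Nat.choose_symm (by omega : j ≤ k)]
  ring

lemma bpoly_comp (k : ℕ) :
    (bpoly k).comp (-1 - X) =
      (-1 : ℝ) ^ k • ∑ j ∈ Finset.range (k + 1), (k.choose j : ℝ) • bpoly j := by
  apply Polynomial.eq_of_infinite_eval_eq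
  apply Set.Infinite.mono (s := Set.range ((↑) : ℕ → ℝ))
  · rintro _ ⟨n, rfl⟩
    simp only [Set.mem_setOf_eq, Polynomial.eval_comp, Polynomial.eval_sub,
      Polynomial.eval_neg, Polynomial.eval_one, Polynomial.eval_X, Polynomial.eval_smul,
      Polynomial.eval_finset_sum, smul_eq_mul]
    rw [bpoly_eval_neg, vandermonde']
    push_cast
    congr 1
    refine Finset.sum_congr rfl fun j _ => ?_
    rw [bpoly_eval_nat]
  · exact Set.infinite_range_of_injective Nat.cast_injective

lemma bpoly_natDegree_le (k : ℕ) : (bpoly k).natDegree ≤ k := by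
  refine le_trans (Polynomial.natDegree_smul_le _ _) ?_
  rw [prod_eq_desc, descPochhammer_natDegree]

lemma bpoly_coeff_self (k : ℕ) : (bpoly k).coeff k = (k.factorial : ℝ)⁻¹ := by
  rw [bpoly, prod_eq_desc, Polynomial.coeff_smul, smul_eq_mul]
  have h := (monic_descPochhammer ℝ k).coeff_natDegree
  rw [descPochhammer_natDegree] at h
  rw [h, mul_one]

lemma mem_span_bpoly (n : ℕ) : ∀ f : Polynomial ℝ, f.natDegree < n →
    f ∈ Submodule.span ℝ (Set.range bpoly) := by
  induction n with
  | zero => exact fun f h => absurd h (Nat.not_lt_zero _)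
  | succ n ih =>
    intro f hf
    have hb : bpoly n ∈ Submodule.span ℝ (Set.range bpoly) :=
      Submodule.subset_span ⟨n, rfl⟩
    set g := f - (f.coeff n * n.factorial) • bpoly n with hg
    have hfg : f = g + (f.coeff n * n.factorial) • bpoly n := by rw [hg]; ring
    have hgc : g.coeff n = 0 := by
      rw [hg, Polynomial.coeff_sub, Polynomial.coeff_smul, bpoly_coeff_self, smul_eq_mul]
      field_simp
      ring
    have hgd : g.natDegree ≤ n := by
      refine le_trans (Polynomial.natDegree_sub_le _ _) (max_le (by omega) ?_)
      exact le_trans (Polynomial.natDegree_smul_le _ _) (bpoly_natDegree_le n)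
    rcases eq_or_ne g 0 with h0 | h0
    · rw [hfg, h0, zero_add]
      exact Submodule.smul_mem _ _ hb
    · have hlt : g.natDegree < n := by
        rcases lt_or_eq_of_le hgd with h | h
        · exact h
        · rw [← h] at hgc
          exact absurd hgc (Polynomial.leadingCoeff_ne_zero.mpr h0)
      rw [hfg]
      exact Submodule.add_mem _ (ih g hlt) (Submodule.smul_mem _ _ hb)

theorem subdivision_operator_commutes_with_involution
    (E : Polynomial ℝ →ₗ[ℝ] Polynomial ℝ)
    (hE : ∀ k : ℕ,
      E ((k.factorial : ℝ)⁻¹ • ∏ i ∈ Finset.range k, (X - C (i : ℝ))) = X ^ k)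
    (f : Polynomial ℝ) :
    (E f).comp (-1 - X) = E (f.comp (-1 - X)) := by
  have hE' : ∀ k : ℕ, E (bpoly k) = X ^ k := hE
  have hmem : f ∈ Submodule.span ℝ (Set.range bpoly) :=
    mem_span_bpoly (f.natDegree + 1) f (Nat.lt_succ_self _)
  induction hmem using Submodule.span_induction with
  | mem p hp =>
    obtain ⟨k, rfl⟩ := hp
    rw [hE' k, bpoly_comp, map_smul, map_sum]
    simp only [map_smul, hE']
    have h1 : (∑ j ∈ Finset.range (k + 1), (k.choose j : ℝ) • (X : Polynomial ℝ) ^ j)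
        = (X + 1) ^ k := by
      rw [add_pow]
      refine Finset.sum_congr rfl fun j _ => ?_
      rw [Polynomial.smul_eq_C_mul, Polynomial.C_eq_natCast]
      ring
    rw [h1, Polynomial.smul_eq_C_mul]
    have h2 : (-1 - X : Polynomial ℝ) = -(X + 1) := by ring
    rw [Polynomial.X_pow_comp, h2, neg_pow, map_pow, map_neg, map_one]
  | zero => simp
  | add x y hx hy ihx ihy => simp [map_add, Polynomial.add_comp, ihx, ihy]
  | smul a x hx ihx => simp [map_smul, Polynomial.smul_comp, ihx]
end

section
/- If A_1, ..., A_n are positive semidefinite Hermitian d×d matrices and A_0 is Hermitian, then the polynomial P(x_1,...,x_n) = det(A_0 + x_1 A_1 + ... + x_n A_n) is either identically zero or stable, i.e. P(z_1,...,z_n) ≠ 0 whenever all Im(z_j) > 0. -/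
open Matrix
open scoped ComplexOrder

lemma sum_mulVec_eq {d n : ℕ} (B : Fin n → Matrix (Fin d) (Fin d) ℂ) (v : Fin d → ℂ) :
    (∑ j, B j) *ᵥ v = ∑ j, B j *ᵥ v := by
  ext i
  simp [mulVec, dotProduct, Finset.sum_apply, Finset.sum_apply', Matrix.sum_apply,
    Finset.sum_mul]
  rw [Finset.sum_comm]

lemma dotProduct_sum_eq {d n : ℕ} (w : Fin n → Fin d → ℂ) (v : Fin d → ℂ) :
    v ⬝ᵥ ∑ j, w j = ∑ j, v ⬝ᵥ w j := by
  simp [dotProduct, Finset.sum_apply, Finset.mul_sum]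
  rw [Finset.sum_comm]

lemma herm_dot_im_zero {d : ℕ} {M : Matrix (Fin d) (Fin d) ℂ} (hM : M.IsHermitian)
    (v : Fin d → ℂ) : (star v ⬝ᵥ M *ᵥ v).im = 0 := by
  have h : star (star v ⬝ᵥ M *ᵥ v) = star v ⬝ᵥ M *ᵥ v := by
    conv_lhs => rw [star_dotProduct, star_star, star_mulVec, hM.eq, ← dotProduct_mulVec]
  have := congrArg Complex.im h
  simp only [Complex.star_def, Complex.conj_im] at this
  linarith

theorem determinantal_polynomial_stable
    (d n : ℕ) (A₀ : Matrix (Fin d) (Fin d) ℂ) (A : Fin n → Matrix (Fin d) (Fin d) ℂ)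
    (hA₀ : A₀.IsHermitian) (hA : ∀ j, (A j).PosSemidef) :
    (∀ z : Fin n → ℂ, (A₀ + ∑ j, z j • A j).det = 0) ∨
    (∀ z : Fin n → ℂ, (∀ j, 0 < (z j).im) → (A₀ + ∑ j, z j • A j).det ≠ 0) := by
  by_cases h : ∃ z : Fin n → ℂ, (∀ j, 0 < (z j).im) ∧ (A₀ + ∑ j, z j • A j).det = 0
  · left
    obtain ⟨z, hz, hdet⟩ := h
    obtain ⟨v, hv, hMv⟩ := (Matrix.exists_mulVec_eq_zero_iff).mpr hdet
    have hexp : A₀ *ᵥ v + ∑ j, z j • ((A j) *ᵥ v) = 0 := by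
      have := hMv
      rw [Matrix.add_mulVec, sum_mulVec_eq] at this
      simpa [Matrix.smul_mulVec] using this
    have hdot : star v ⬝ᵥ A₀ *ᵥ v + ∑ j, z j * (star v ⬝ᵥ (A j) *ᵥ v) = 0 := by
      have := congrArg (fun w => star v ⬝ᵥ w) hexp
      simp only [dotProduct_add, dotProduct_zero] at this
      rw [dotProduct_sum_eq] at this
      simpa [dotProduct_smul, smul_eq_mul] using this
    have hpsd : ∀ j, 0 ≤ star v ⬝ᵥ (A j) *ᵥ v := fun j => (hA j).dotProduct_mulVec_nonneg v
    have him : ∀ j, (star v ⬝ᵥ (A j) *ᵥ v).im = 0 :=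
      fun j => herm_dot_im_zero (hA j).isHermitian v
    have hre : ∀ j, 0 ≤ (star v ⬝ᵥ (A j) *ᵥ v).re := by
      intro j
      exact (Complex.le_def.mp (hpsd j)).1
    have hsum : ∑ j, (z j).im * (star v ⬝ᵥ (A j) *ᵥ v).re = 0 := by
      have := congrArg Complex.im hdot
      simp only [Complex.add_im, Complex.im_sum, Complex.mul_im, Complex.zero_im,
        herm_dot_im_zero hA₀ v] at this
      calc ∑ j, (z j).im * (star v ⬝ᵥ (A j) *ᵥ v).re
          = ∑ j, ((z j).re * (star v ⬝ᵥ (A j) *ᵥ v).im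
              + (z j).im * (star v ⬝ᵥ (A j) *ᵥ v).re) := by
            refine Finset.sum_congr rfl fun j _ => ?_
            rw [him j]; ring
        _ = 0 := by linarith
    have hzero : ∀ j, star v ⬝ᵥ (A j) *ᵥ v = 0 := by
      intro j
      have hterm : (z j).im * (star v ⬝ᵥ (A j) *ᵥ v).re = 0 := by
        have hnn : ∀ j ∈ Finset.univ, 0 ≤ (z j).im * (star v ⬝ᵥ (A j) *ᵥ v).re :=
          fun j _ => mul_nonneg (le_of_lt (hz j)) (hre j)
        exact (Finset.sum_eq_zero_iff_of_nonneg hnn).mp hsum j (Finset.mem_univ j)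
      have : (star v ⬝ᵥ (A j) *ᵥ v).re = 0 := by
        rcases mul_eq_zero.mp hterm with h' | h'
        · exact absurd h' (ne_of_gt (hz j))
        · exact h'
      exact Complex.ext this (him j)
    have hAv : ∀ j, (A j) *ᵥ v = 0 :=
      fun j => ((hA j).dotProduct_mulVec_zero_iff v).mp (hzero j)
    have hA0v : A₀ *ᵥ v = 0 := by
      have := hexp
      simp only [hAv, smul_zero, Finset.sum_const_zero, add_zero] at this
      exact this
    intro w
    rw [← Matrix.exists_mulVec_eq_zero_iff]
    refine ⟨v, hv, ?_⟩
    rw [Matrix.add_mulVec, sum_mulVec_eq]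
    simp [Matrix.smul_mulVec, hAv, hA0v]
  · right
    intro z hz hdet
    exact h ⟨z, hz, hdet⟩
end

section
/- Let f and g be real-rooted polynomials with positive leading coefficients. If for all λ, μ > 0 the polynomial (λx + μ)f + g is real-rooted, then the roots of f and g interlace with f ≪ g (f is an interleaver of g), and conversely. -/
open Polynomial

open Real Filter Set

noncomputable def thAng (z : ℂ) (t : ℝ) : ℝ := π/2 - Real.arctan ((z.re - t)/z.im)

lemma thAng_pos (z : ℂ) (t : ℝ) : 0 < thAng z t := by
  have := Real.arctan_lt_pi_div_two ((z.re - t)/z.im)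
  unfold thAng; linarith

lemma thAng_lt_pi (z : ℂ) (t : ℝ) : thAng z t < π := by
  have := Real.neg_pi_div_two_lt_arctan ((z.re - t)/z.im)
  have := Real.pi_pos
  unfold thAng; linarith

lemma thAng_mono (z : ℂ) (hz : 0 < z.im) {s t : ℝ} (h : s ≤ t) :
    thAng z s ≤ thAng z t := by
  unfold thAng
  have : (z.re - t)/z.im ≤ (z.re - s)/z.im := by gcongr <;> linarith
  have := Real.arctan_strictMono.monotone this
  linarith

lemma polar (z : ℂ) (hz : 0 < z.im) (t : ℝ) :
    z - t = (‖z - t‖ : ℝ) * Complex.exp (thAng z t * Complex.I) := by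
  have hy := hz
  set x := z.re with hx
  set y := z.im with hyy
  have habs : ‖z - t‖ = Real.sqrt ((x - t)^2 + y^2) := by
    rw [Complex.norm_def, Complex.normSq_apply]
    simp [Complex.sub_re, Complex.sub_im, hx, hyy]
    ring_nf
  set u := (x - t)/y with hu
  have hsq : Real.sqrt (1 + u^2) = Real.sqrt ((x - t)^2 + y^2) / y := by
    rw [eq_div_iff (by positivity)]
    rw [← Real.sqrt_sq hy.le, ← Real.sqrt_mul (by positivity)]
    congr 1
    field_simp [hu]
    rw [Real.sq_sqrt (sq_nonneg y), hu, add_mul, div_pow, div_mul_cancel₀ _ (by positivity : y ^ 2 ≠ 0)]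
    ring
  have hcos : Real.cos (thAng z t) = Real.sin (Real.arctan u) := by
    unfold thAng; rw [Real.cos_pi_div_two_sub]
  have hsin : Real.sin (thAng z t) = Real.cos (Real.arctan u) := by
    unfold thAng; rw [Real.sin_pi_div_two_sub]
  have hs : Real.sqrt (1 + u^2) > 0 := by positivity
  apply Complex.ext
  · rw [Complex.mul_re]
    simp only [Complex.ofReal_re, Complex.ofReal_im, Complex.exp_ofReal_mul_I_re,
      Complex.exp_ofReal_mul_I_im]
    rw [hcos, Real.sin_arctan, habs, hsq]
    simp only [Complex.sub_re, Complex.ofReal_re]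
    field_simp
    rw [hu, mul_div_assoc', mul_div_cancel_left₀ _ hy.ne', hx]
    ring
  · rw [Complex.mul_im]
    simp only [Complex.ofReal_re, Complex.ofReal_im, Complex.exp_ofReal_mul_I_re,
      Complex.exp_ofReal_mul_I_im]
    rw [hsin, Real.cos_arctan, habs, hsq]
    simp only [Complex.sub_im, Complex.ofReal_im]
    field_simp
    rw [hyy]
    ring

lemma prod_polar {k : ℕ} (t : Fin k → ℝ) (z : ℂ) (hz : 0 < z.im) :
    ∏ i, (z - (t i : ℂ)) =
      ((∏ i, ‖z - (t i : ℂ)‖) : ℝ) *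
        Complex.exp ((∑ i, thAng z (t i) : ℝ) * Complex.I) := by
  push_cast
  rw [Finset.sum_mul, Complex.exp_sum, ← Finset.prod_mul_distrib]
  exact Finset.prod_congr rfl fun i _ => by
    rw [← polar z hz (t i)]

lemma aeval_polar {k : ℕ} (d : ℝ) (t : Fin k → ℝ) (z : ℂ) (hz : 0 < z.im) :
    aeval z (C d * ∏ i, (X - C (t i))) =
      ((d * ∏ i, ‖z - (t i : ℂ)‖) : ℝ) *
        Complex.exp ((∑ i, thAng z (t i) : ℝ) * Complex.I) := by
  rw [map_mul, map_prod]
  simp only [map_sub, aeval_X, aeval_C, Complex.coe_algebraMap]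
  rw [prod_polar t z hz]
  push_cast
  ring_nf

lemma abs_prod_pos {k : ℕ} (t : Fin k → ℝ) (z : ℂ) (hz : z.im ≠ 0) :
    0 < ∏ i, ‖z - (t i : ℂ)‖ := by
  apply Finset.prod_pos
  intro i _
  apply norm_pos_iff.mpr
  intro h
  apply hz
  have : (z - (t i : ℂ)).im = 0 := by rw [h]; rfl
  simpa using this

/-- key interlacing sum bound -/
lemma sumBound : ∀ (m : ℕ) (n : ℕ), (n = m ∨ n = m + 1) →
    ∀ (u : Fin m → ℝ) (v : Fin n → ℝ),
    (∀ i, 0 < u i) → (∀ j, 0 < v j) →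
    (∀ (i : Fin m) (hi : (i : ℕ) < n), u i ≤ v ⟨i, hi⟩) →
    (∀ (i : Fin m) (hi : (i : ℕ) + 1 < n), v ⟨(i : ℕ) + 1, hi⟩ ≤ u i) →
    0 ≤ (∑ j, v j) - ∑ i, u i ∧
      (∑ j, v j) - ∑ i, u i ≤ (if h : 0 < n then v ⟨0, h⟩ else 0) := by
  intro m
  induction m with
  | zero =>
    intro n hn u v hu hv h1 h2
    rcases hn with rfl | rfl
    · simp
    · simp only [Nat.zero_add]
      rw [Fin.sum_univ_one]
      simp only [Finset.univ_eq_empty, Finset.sum_empty, sub_zero]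
      have := hv 0
      constructor
      · linarith
      · rw [dif_pos (by norm_num : (0:ℕ) < 1)]
        exact (congrArg v (Fin.ext rfl)).le
  | succ m ih =>
    intro n hn u v hu hv h1 h2
    -- n ≥ 1
    have hn1 : 0 < n := by omega
    obtain ⟨n', rfl⟩ : ∃ n', n = n' + 1 := ⟨n - 1, by omega⟩
    set u' : Fin m → ℝ := fun i => u i.succ with hu'
    set v' : Fin n' → ℝ := fun j => v j.succ with hv'
    have hn' : n' = m ∨ n' = m + 1 := by omega
    have hh1 : ∀ (i : Fin m) (hi : (i : ℕ) < n'), u' i ≤ v' ⟨i, hi⟩ := by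
      intro i hi
      have hh : ((i.succ : Fin (m+1)) : ℕ) < n' + 1 := by
        simpa [Fin.val_succ] using Nat.succ_lt_succ hi
      have t1 := h1 i.succ hh
      have he : (⟨((i.succ : Fin (m+1)) : ℕ), hh⟩ : Fin (n'+1))
          = ((⟨(i : ℕ), hi⟩ : Fin n')).succ := by
        simp [Fin.ext_iff]
      rwa [he] at t1
    have hh2 : ∀ (i : Fin m) (hi : (i : ℕ) + 1 < n'), v' ⟨(i : ℕ) + 1, hi⟩ ≤ u' i := by
      intro i hi
      have hh : ((i.succ : Fin (m+1)) : ℕ) + 1 < n' + 1 := by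
        simp only [Fin.val_succ]; omega
      have t2 := h2 i.succ hh
      have he : (⟨((i.succ : Fin (m+1)) : ℕ) + 1, hh⟩ : Fin (n'+1))
          = ((⟨(i : ℕ) + 1, hi⟩ : Fin n')).succ := by
        simp [Fin.ext_iff]
      rwa [he] at t2
    have ihh := ih n' hn' u' v' (fun i => hu _) (fun j => hv _) hh1 hh2
    rw [Fin.sum_univ_succ (f := u), Fin.sum_univ_succ (f := v)]
    have h10 : u 0 ≤ v ⟨0, hn1⟩ := h1 0 hn1
    have hv0 : v 0 = v ⟨0, hn1⟩ := rfl
    constructor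
    · have := ihh.1
      have := hu 0
      have := hv 0
      have e1 : (∑ j, v' j) - ∑ i, u' i ≥ 0 := ihh.1
      simp only [hu', hv'] at e1
      linarith [e1]
    · rw [dif_pos hn1]
      by_cases hcn : 0 < n'
      · have e2 := ihh.2
        rw [dif_pos hcn] at e2
        have : v' ⟨0, hcn⟩ ≤ u 0 := by
          have t := h2 0 (by simp only [Fin.val_zero]; omega)
          have he : v' ⟨0, hcn⟩
              = v ⟨((0 : Fin (m+1)) : ℕ) + 1, by simp only [Fin.val_zero]; omega⟩ := by
            rw [hv']
            exact congrArg v (Fin.ext (by simp))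
          rw [he]
          exact t
        have e1 : (∑ j, v' j) - ∑ i, u' i ≤ u 0 := le_trans e2 this
        simp only [hu', hv'] at e1 ⊢
        linarith
      · have e2 := ihh.2
        rw [dif_neg hcn] at e2
        have := hu 0
        simp only [hu', hv'] at e2 ⊢
        linarith

lemma re_mk (x y : ℝ) : ((x : ℂ) + y * Complex.I).re = x := by simp
lemma im_mk (x y : ℝ) : ((x : ℂ) + y * Complex.I).im = y := by simp

lemma tendsto_thAng_lt (x t : ℝ) (h : t < x) :
    Tendsto (fun y : ℝ => thAng ((x : ℂ) + y * Complex.I) t) (nhdsWithin 0 (Ioi 0)) (nhds 0) := by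
  have h1 : Tendsto (fun y : ℝ => (x - t) * y⁻¹) (nhdsWithin 0 (Ioi 0)) atTop :=
    Tendsto.const_mul_atTop (by linarith) tendsto_inv_nhdsGT_zero
  have h2 : Tendsto (fun y : ℝ => Real.arctan ((x - t) * y⁻¹)) (nhdsWithin 0 (Ioi 0))
      (nhds (π/2)) :=
    (Real.tendsto_arctan_atTop.mono_right nhdsWithin_le_nhds).comp h1
  have h3 := h2.const_sub (π/2)
  simp only [sub_self] at h3
  apply h3.congr'
  filter_upwards [self_mem_nhdsWithin] with y hy
  simp only [thAng, re_mk, im_mk, div_eq_mul_inv]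

lemma tendsto_thAng_gt (x t : ℝ) (h : x < t) :
    Tendsto (fun y : ℝ => thAng ((x : ℂ) + y * Complex.I) t) (nhdsWithin 0 (Ioi 0)) (nhds π) := by
  have h1 : Tendsto (fun y : ℝ => (x - t) * y⁻¹) (nhdsWithin 0 (Ioi 0)) atBot :=
    (tendsto_const_mul_atBot_of_neg (show x - t < 0 by linarith)).mpr tendsto_inv_nhdsGT_zero
  have h2 : Tendsto (fun y : ℝ => Real.arctan ((x - t) * y⁻¹)) (nhdsWithin 0 (Ioi 0))
      (nhds (-(π/2))) :=
    (Real.tendsto_arctan_atBot.mono_right nhdsWithin_le_nhds).comp h1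
  have h3 := h2.const_sub (π/2)
  have : π/2 - -(π/2) = π := by ring
  rw [this] at h3
  apply h3.congr'
  filter_upwards [self_mem_nhdsWithin] with y hy
  simp only [thAng, re_mk, im_mk, div_eq_mul_inv]

lemma tendsto_sumAng {k : ℕ} (t : Fin k → ℝ) (x : ℝ) (hx : ∀ i, t i ≠ x) :
    Tendsto (fun y : ℝ => ∑ i, thAng ((x : ℂ) + y * Complex.I) (t i))
      (nhdsWithin 0 (Ioi 0)) (nhds (∑ i, if x < t i then π else 0)) := by
  apply tendsto_finset_sum
  intro i _
  rcases lt_or_gt_of_ne (hx i) with h | h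
  · rw [if_neg (by linarith)]
    exact tendsto_thAng_lt x (t i) h
  · rw [if_pos h]
    exact tendsto_thAng_gt x (t i) h

lemma sum_ind_ge {k : ℕ} (t : Fin k → ℝ) (x : ℝ) (K : ℕ) (hK : K < k)
    (h : ∀ j : Fin k, (j : ℕ) ≤ K → x < t j) :
    ((K : ℝ) + 1) * π ≤ ∑ j, if x < t j then π else 0 := by
  have h1 : ∀ j : Fin k, (if (j : ℕ) ≤ K then π else 0) ≤ (if x < t j then π else 0) := by
    intro j
    by_cases hj : (j : ℕ) ≤ K
    · rw [if_pos hj, if_pos (h j hj)]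
    · rw [if_neg hj]
      positivity
  calc ((K : ℝ) + 1) * π = ∑ j : Fin k, if (j : ℕ) ≤ K then π else 0 := by
        rw [Fin.sum_univ_eq_sum_range (fun j => if j ≤ K then π else 0)]
        rw [← Finset.sum_filter]
        have : (Finset.range k).filter (· ≤ K) = Finset.range (K + 1) := by
          ext j
          simp [Nat.lt_succ_iff]
          omega
        rw [this, Finset.sum_const, Finset.card_range]
        push_cast; ring
    _ ≤ _ := Finset.sum_le_sum fun j _ => h1 j

lemma sum_ind_le {k : ℕ} (t : Fin k → ℝ) (x : ℝ) (K : ℕ)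
    (h : ∀ j : Fin k, K ≤ (j : ℕ) → t j < x) :
    ∑ j, (if x < t j then π else 0) ≤ (K : ℝ) * π := by
  have h1 : ∀ j : Fin k, (if x < t j then π else 0) ≤ (if (j : ℕ) < K then π else 0) := by
    intro j
    by_cases hj : (j : ℕ) < K
    · rw [if_pos hj]
      by_cases hx : x < t j
      · rw [if_pos hx]
      · rw [if_neg hx]; positivity
    · rw [if_neg hj, if_neg (by push_neg at hj ⊢; linarith [h j (by omega)])]
  calc ∑ j, (if x < t j then π else 0) ≤ ∑ j : Fin k, if (j : ℕ) < K then π else 0 :=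
        Finset.sum_le_sum fun j _ => h1 j
    _ ≤ (K : ℝ) * π := by
        rw [Fin.sum_univ_eq_sum_range (fun j => if j < K then π else 0)]
        rw [← Finset.sum_filter]
        have he : (Finset.range k).filter (· < K) = Finset.range (min k K) := by
          ext j; simp [lt_min_iff]
        rw [he, Finset.sum_const, Finset.card_range]
        have hm : ((min k K : ℕ) : ℝ) ≤ (K : ℝ) := by exact_mod_cast min_le_right k K
        have hπ := Real.pi_pos
        calc (min k K : ℕ) • π = ((min k K : ℕ) : ℝ) * π := nsmul_eq_mul _ _
          _ ≤ (K : ℝ) * π := by nlinarith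

lemma eval_pos_of_nonneg_coeff (p : Polynomial ℝ) (hp : p ≠ 0) (hco : ∀ k, 0 ≤ p.coeff k)
    (t : ℝ) (ht : 0 < t) : 0 < p.eval t := by
  rw [Polynomial.eval_eq_sum_range]
  apply Finset.sum_pos'
  · intro i _
    have := hco i
    positivity
  · refine ⟨p.natDegree, Finset.self_mem_range_succ _, ?_⟩
    have h1 : p.coeff p.natDegree ≠ 0 := by
      rw [← Polynomial.leadingCoeff]
      exact Polynomial.leadingCoeff_ne_zero.mpr hp
    have h2 := hco p.natDegree
    have : 0 < p.coeff p.natDegree := lt_of_le_of_ne h2 (Ne.symm h1)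
    positivity

lemma roots_nonpos {k : ℕ} (d : ℝ) (hd : 0 < d) (t : Fin k → ℝ) (p : Polynomial ℝ)
    (hp : p = C d * ∏ i, (X - C (t i))) (hco : ∀ j, 0 ≤ p.coeff j) :
    ∀ i, t i ≤ 0 := by
  intro i
  by_contra hti
  push_neg at hti
  have hpne : p ≠ 0 := by
    rw [hp]
    apply mul_ne_zero
    · simpa using hd.ne'
    · exact (monic_prod_of_monic _ _ fun j _ => monic_X_sub_C (t j)).ne_zero
  have hpos := eval_pos_of_nonneg_coeff p hpne hco (t i) hti
  have : p.eval (t i) = 0 := by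
    rw [hp, eval_mul, eval_prod]
    apply mul_eq_zero_of_right
    apply Finset.prod_eq_zero (Finset.mem_univ i)
    simp
  rw [this] at hpos
  exact lt_irrefl _ hpos

lemma noGap (m n : ℕ) (c c' : ℝ) (hc : 0 < c) (hc' : 0 < c')
    (α : Fin m → ℝ) (β : Fin n → ℝ) (f g : Polynomial ℝ)
    (hf : f = C c * ∏ i, (X - C (α i))) (hg : g = C c' * ∏ i, (X - C (β i)))
    (H : ∀ lam mu : ℝ, 0 < lam → 0 < mu →
        ∀ z : ℂ, aeval z ((C lam * X + C mu) * f + g) = 0 → z.im = 0)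
    (z : ℂ) (hz : 0 < z.im) (K : ℤ) :
    ¬ (π + 2*K*π < (∑ j, thAng z (β j)) - ∑ i, thAng z (α i) ∧
       (∑ j, thAng z (β j)) - ∑ i, thAng z (α i) < π + thAng z 0 + 2*K*π) := by
  rintro ⟨hgl, hgr⟩
  set A := ∑ i, thAng z (α i) with hA
  set B := ∑ j, thAng z (β j) with hB
  set Θ := thAng z 0 with hΘ
  have hΘ1 : 0 < Θ := thAng_pos z 0
  have hΘ2 : Θ < π := thAng_lt_pi z 0
  set φ := B - A - π - 2*K*π with hφ
  have hφ1 : 0 < φ := by simp only [hφ]; linarith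
  have hφ2 : φ < Θ := by simp only [hφ]; linarith
  have hsφ : 0 < Real.sin φ := Real.sin_pos_of_pos_of_lt_pi hφ1 (by linarith)
  have hsΘ : 0 < Real.sin Θ := Real.sin_pos_of_pos_of_lt_pi hΘ1 hΘ2
  have hsΘφ : 0 < Real.sin (Θ - φ) := Real.sin_pos_of_pos_of_lt_pi (by linarith) (by linarith)
  have hzne : z ≠ 0 := fun h => by simp [h] at hz
  set r := ‖z‖ with hr
  have hr1 : 0 < r := norm_pos_iff.mpr hzne
  set Rf := ∏ i, ‖z - ((α i : ℝ) : ℂ)‖ with hRf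
  set Rg := ∏ j, ‖z - ((β j : ℝ) : ℂ)‖ with hRg
  have hRf1 : 0 < Rf := abs_prod_pos α z hz.ne'
  have hRg1 : 0 < Rg := abs_prod_pos β z hz.ne'
  set ρ := (c' * Rg) / (c * Rf) with hρ
  have hρ1 : 0 < ρ := div_pos (mul_pos hc' hRg1) (mul_pos hc hRf1)
  set lam := ρ * Real.sin φ / (r * Real.sin Θ) with hlam
  set mu := ρ * Real.sin (Θ - φ) / Real.sin Θ with hmu
  have hlam1 : 0 < lam := div_pos (mul_pos hρ1 hsφ) (mul_pos hr1 hsΘ)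
  have hmu1 : 0 < mu := div_pos (mul_pos hρ1 hsΘφ) hsΘ
  -- z in polar coordinates
  have zpolar : z = (r : ℂ) * Complex.exp (Θ * Complex.I) := by
    have := polar z hz 0
    simpa using this
  have hre : z.re = r * Real.cos Θ := by
    conv_lhs => rw [zpolar]
    simp [Complex.mul_re, Complex.exp_ofReal_mul_I_re, Complex.exp_ofReal_mul_I_im]
  have him : z.im = r * Real.sin Θ := by
    conv_lhs => rw [zpolar]
    simp [Complex.mul_im, Complex.exp_ofReal_mul_I_re, Complex.exp_ofReal_mul_I_im]
  clear_value A B Θ φ r Rf Rg ρ lam mu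
  -- the key identity : lam * z + mu = ρ exp(i φ)
  have key1 : (lam : ℂ) * z + (mu : ℂ) = (ρ : ℂ) * Complex.exp ((φ : ℝ) * Complex.I) := by
    apply Complex.ext
    · simp only [Complex.add_re, Complex.mul_re, Complex.ofReal_re, Complex.ofReal_im,
        Complex.exp_ofReal_mul_I_re, Complex.exp_ofReal_mul_I_im]
      rw [hre, hlam, hmu, Real.sin_sub]
      have h0 : Real.sin Θ ≠ 0 := hsΘ.ne'
      have h0r : r ≠ 0 := hr1.ne'
      field_simp
      ring
    · simp only [Complex.add_im, Complex.mul_im, Complex.ofReal_re, Complex.ofReal_im,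
        Complex.exp_ofReal_mul_I_re, Complex.exp_ofReal_mul_I_im]
      rw [him, hlam]
      have h0 : Real.sin Θ ≠ 0 := hsΘ.ne'
      have h0r : r ≠ 0 := hr1.ne'
      field_simp
      ring
  -- the exponential identity
  have hφA : φ + A = B - π - 2*K*π := by simp only [hφ]; ring
  have hexp : Complex.exp (((φ + A : ℝ)) * Complex.I) = - Complex.exp ((B : ℝ) * Complex.I) := by
    have h1 : ((φ + A : ℝ) : ℂ) * Complex.I =
        (B : ℝ) * Complex.I + π * Complex.I + ((-(K+1) : ℤ) : ℂ) * (2 * π * Complex.I) := by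
      rw [hφA]
      push_cast
      ring
    rw [h1, Complex.exp_add, Complex.exp_add, Complex.exp_int_mul_two_pi_mul_I,
      Complex.exp_pi_mul_I]
    ring
  -- the root
  have hroot : aeval z ((C lam * X + C mu) * f + g) = 0 := by
    rw [map_add, map_mul, map_add, map_mul, aeval_X, aeval_C, aeval_C]
    rw [hf, hg, aeval_polar c α z hz, aeval_polar c' β z hz]
    rw [← hA, ← hB, ← hRf, ← hRg]
    have e1 : ((lam : ℂ) * z + (mu : ℂ)) * (((c * Rf : ℝ) : ℂ) *
          Complex.exp (((A : ℝ)) * Complex.I)) =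
        - ((c' * Rg : ℝ) : ℂ) * Complex.exp ((B : ℝ) * Complex.I) := by
      rw [key1]
      have e2 : (ρ : ℂ) * Complex.exp ((φ:ℝ) * Complex.I) * (((c * Rf : ℝ) : ℂ) *
            Complex.exp (((A : ℝ)) * Complex.I)) =
          ((ρ * (c * Rf) : ℝ) : ℂ) * Complex.exp (((φ + A : ℝ)) * Complex.I) := by
        push_cast
        rw [add_mul, Complex.exp_add]
        ring
      rw [e2, hexp]
      have e3 : ρ * (c * Rf) = c' * Rg := by
        rw [hρ]
        field_simp
      rw [e3]
      ring
    simp only [Complex.coe_algebraMap]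
    rw [e1]
    ring
  have := H lam mu hlam1 hmu1 z hroot
  exact hz.ne' this

lemma tendsto_thAng_atTop (t : ℝ) :
    Tendsto (fun x : ℝ => thAng ((x : ℂ) + Complex.I) t) atTop (nhds 0) := by
  have h1 : Tendsto (fun x : ℝ => x - t) atTop atTop :=
    tendsto_atTop_add_const_right _ (-t) tendsto_id
  have h2 := (Real.tendsto_arctan_atTop.mono_right nhdsWithin_le_nhds).comp h1
  have h3 := h2.const_sub (π/2)
  simp only [sub_self] at h3
  apply h3.congr
  intro x
  simp only [thAng, Function.comp]
  norm_num

lemma bandAll (m n : ℕ) (c c' : ℝ) (hc : 0 < c) (hc' : 0 < c')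
    (α : Fin m → ℝ) (β : Fin n → ℝ) (f g : Polynomial ℝ)
    (hf : f = C c * ∏ i, (X - C (α i))) (hg : g = C c' * ∏ i, (X - C (β i)))
    (H : ∀ lam mu : ℝ, 0 < lam → 0 < mu →
        ∀ z : ℂ, aeval z ((C lam * X + C mu) * f + g) = 0 → z.im = 0) :
    ∀ z : ℂ, 0 < z.im →
      thAng z 0 - π ≤ (∑ j, thAng z (β j)) - ∑ i, thAng z (α i) ∧
        (∑ j, thAng z (β j)) - ∑ i, thAng z (α i) ≤ π := by
  set U : Set ℂ := {w : ℂ | 0 < w.im} with hU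
  have hUc : Convex ℝ U := convex_halfSpace_im_gt 0
  haveI : PreconnectedSpace ↥U := Subtype.preconnectedSpace hUc.isPreconnected
  set Sf : ↥U → ℝ := fun w => (∑ j, thAng w.1 (β j)) - ∑ i, thAng w.1 (α i) with hSf
  set Tf : ↥U → ℝ := fun w => thAng w.1 0 with hTf
  have cthAng : ∀ t : ℝ, Continuous (fun w : ↥U => thAng w.1 t) := by
    intro t
    apply Continuous.sub continuous_const
    apply Real.continuous_arctan.comp
    apply Continuous.div
    · exact (Complex.continuous_re.comp continuous_subtype_val).sub continuous_const
    · exact Complex.continuous_im.comp continuous_subtype_val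
    · exact fun w => ne_of_gt w.2
  have hScont : Continuous Sf :=
    (continuous_finset_sum _ fun j _ => cthAng (β j)).sub
      (continuous_finset_sum _ fun i _ => cthAng (α i))
  have hTcont : Continuous Tf := cthAng 0
  set s : Set ↥U := {w | Tf w - π ≤ Sf w ∧ Sf w ≤ π} with hs
  have hclosed : IsClosed s := by
    apply IsClosed.inter
    · exact isClosed_le (hTcont.sub continuous_const) hScont
    · exact isClosed_le hScont continuous_const
  have hopen : IsOpen s := by
    rw [isOpen_iff_mem_nhds]
    intro w hw
    have hθ0 : 0 < Tf w := thAng_pos _ 0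
    have hev1 : {w' : ↥U | Sf w' ∈ Set.Ioo (Sf w - Tf w/4) (Sf w + Tf w/4)} ∈ nhds w :=
      hScont.tendsto w (Ioo_mem_nhds (by linarith) (by linarith))
    have hev2 : {w' : ↥U | Tf w' ∈ Set.Ioo (Tf w * 3/4) π} ∈ nhds w :=
      hTcont.tendsto w (Ioo_mem_nhds (by linarith) (thAng_lt_pi _ 0))
    filter_upwards [hev1, hev2] with w' h1 h2
    obtain ⟨hw1, hw2⟩ := hw
    obtain ⟨h1a, h1b⟩ := h1
    obtain ⟨h2a, h2b⟩ := h2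
    simp only [hSf, hTf] at h1a h1b h2a h2b hw1 hw2 hθ0
    constructor
    · by_contra hcon
      push_neg at hcon
      simp only [hSf, hTf] at hcon
      refine noGap m n c c' hc hc' α β f g hf hg H w'.1 w'.2 (-1) ⟨?_, ?_⟩
      · push_cast
        linarith
      · push_cast
        linarith
    · by_contra hcon
      push_neg at hcon
      simp only [hSf, hTf] at hcon
      refine noGap m n c c' hc hc' α β f g hf hg H w'.1 w'.2 0 ⟨?_, ?_⟩
      · push_cast
        linarith
      · push_cast
        linarith
  have hne : s.Nonempty := by
    have hS : Tendsto (fun x : ℝ => (∑ j, thAng ((x : ℂ) + Complex.I) (β j)) -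
        ∑ i, thAng ((x : ℂ) + Complex.I) (α i)) atTop (nhds 0) := by
      have h1 : Tendsto (fun x : ℝ => ∑ j, thAng ((x : ℂ) + Complex.I) (β j)) atTop
          (nhds 0) := by
        have := tendsto_finset_sum (Finset.univ : Finset (Fin n))
          (fun j _ => tendsto_thAng_atTop (β j))
        simpa using this
      have h2 : Tendsto (fun x : ℝ => ∑ i, thAng ((x : ℂ) + Complex.I) (α i)) atTop
          (nhds 0) := by
        have := tendsto_finset_sum (Finset.univ : Finset (Fin m))
          (fun i _ => tendsto_thAng_atTop (α i))
        simpa using this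
      simpa using h1.sub h2
    have hT : Tendsto (fun x : ℝ => thAng ((x : ℂ) + Complex.I) 0) atTop (nhds 0) :=
      tendsto_thAng_atTop 0
    have hπ := Real.pi_pos
    have e1 := hS.eventually_mem
      (Ioo_mem_nhds (show -(π/2) < (0:ℝ) by linarith) (show (0:ℝ) < π by linarith))
    have e2 := hT.eventually_mem (Iio_mem_nhds (show (0:ℝ) < π/2 by linarith))
    obtain ⟨x, hx1, hx2⟩ := (e1.and e2).exists
    simp only [Set.mem_Ioo, Set.mem_Iio] at hx1 hx2
    refine ⟨⟨(x : ℂ) + Complex.I, by simp [hU]⟩, ?_, ?_⟩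
    · simp only [hSf, hTf]
      obtain ⟨hx1a, hx1b⟩ := hx1
      linarith
    · simp only [hSf, hTf]
      linarith [hx1.2]
  have huniv : s = Set.univ := ((isClopen_iff).mp ⟨hclosed, hopen⟩).resolve_left
    (Set.nonempty_iff_ne_empty.mp hne)
  intro z hz
  have : (⟨z, hz⟩ : ↥U) ∈ s := huniv ▸ Set.mem_univ _
  exact this

lemma limit_bounds (m n : ℕ) (α : Fin m → ℝ) (β : Fin n → ℝ)
    (band : ∀ z : ℂ, 0 < z.im →
      thAng z 0 - π ≤ (∑ j, thAng z (β j)) - ∑ i, thAng z (α i) ∧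
        (∑ j, thAng z (β j)) - ∑ i, thAng z (α i) ≤ π)
    (x : ℝ) (hax : ∀ i, α i ≠ x) (hbx : ∀ j, β j ≠ x) :
    ((∑ j, if x < β j then π else 0) - (∑ i, if x < α i then π else 0) ≤ π) ∧
      (x < 0 → 0 ≤ (∑ j, if x < β j then π else 0) - (∑ i, if x < α i then π else 0)) := by
  have him : ∀ y : ℝ, y ∈ Ioi (0:ℝ) → 0 < ((x:ℂ) + y * Complex.I).im := by
    intro y hy
    rw [im_mk]
    exact hy
  have limS : Tendsto (fun y : ℝ => (∑ j, thAng ((x:ℂ) + y * Complex.I) (β j)) -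
      ∑ i, thAng ((x:ℂ) + y * Complex.I) (α i)) (nhdsWithin 0 (Ioi 0))
      (nhds ((∑ j, if x < β j then π else 0) - (∑ i, if x < α i then π else 0))) :=
    (tendsto_sumAng β x hbx).sub (tendsto_sumAng α x hax)
  constructor
  · apply le_of_tendsto limS
    filter_upwards [self_mem_nhdsWithin] with y hy
    exact (band _ (him y hy)).2
  · intro hx0
    have limT : Tendsto (fun y : ℝ => thAng ((x:ℂ) + y * Complex.I) 0 - π)
        (nhdsWithin 0 (Ioi 0)) (nhds 0) := by
      have := (tendsto_thAng_gt x 0 hx0).sub_const π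
      simpa using this
    apply le_of_tendsto_of_tendsto limT limS
    filter_upwards [self_mem_nhdsWithin] with y hy
    exact (band _ (him y hy)).1

/-- For real-rooted `f = c∏(X - αᵢ)` and `g = c'∏(X - βᵢ)` with positive leading
coefficients and nonnegative coefficients, whose roots are listed in decreasing order,
`(λx + μ)f + g` is real-rooted for all `λ, μ > 0` if and only if `f ≪ g`, i.e. the roots
interlace as `⋯ ≤ α₂ ≤ β₂ ≤ α₁ ≤ β₁`. -/
theorem interleaver_iff_linear_combinations_real_rooted
    (m n : ℕ) (c c' : ℝ) (hc : 0 < c) (hc' : 0 < c')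
    (α : Fin m → ℝ) (β : Fin n → ℝ) (hα : Antitone α) (hβ : Antitone β)
    (f g : Polynomial ℝ)
    (hf : f = C c * ∏ i, (X - C (α i))) (hg : g = C c' * ∏ i, (X - C (β i)))
    (hfcoeff : ∀ k, 0 ≤ f.coeff k) (hgcoeff : ∀ k, 0 ≤ g.coeff k) :
    (∀ lam mu : ℝ, 0 < lam → 0 < mu →
        ∀ z : ℂ, aeval z ((C lam * X + C mu) * f + g) = 0 → z.im = 0) ↔
      ((n = m ∨ n = m + 1) ∧
        (∀ (i : Fin m) (hi : (i : ℕ) < n), α i ≤ β ⟨i, hi⟩) ∧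
        (∀ (i : Fin m) (hi : (i : ℕ) + 1 < n), β ⟨(i : ℕ) + 1, hi⟩ ≤ α i)) := by
  have hα0 : ∀ i, α i ≤ 0 := roots_nonpos c hc α f hf hfcoeff
  have hβ0 : ∀ j, β j ≤ 0 := roots_nonpos c' hc' β g hg hgcoeff
  have hπ := Real.pi_pos
  constructor
  · -- forward direction
    intro H
    have band := bandAll m n c c' hc hc' α β f g hf hg H
    -- (a) degree condition via very negative x
    have hdeg : n = m ∨ n = m + 1 := by
      set x : ℝ := -1 - (∑ i, |α i|) - (∑ j, |β j|) with hx
      have hsa : ∀ i, |α i| ≤ ∑ k, |α k| :=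
        fun i => Finset.single_le_sum (fun k _ => abs_nonneg (α k)) (Finset.mem_univ i)
      have hsb : ∀ j, |β j| ≤ ∑ k, |β k| :=
        fun j => Finset.single_le_sum (fun k _ => abs_nonneg (β k)) (Finset.mem_univ j)
      have hsa0 : 0 ≤ ∑ k, |α k| := Finset.sum_nonneg fun k _ => abs_nonneg _
      have hsb0 : 0 ≤ ∑ k, |β k| := Finset.sum_nonneg fun k _ => abs_nonneg _
      have hxa : ∀ i, x < α i := by
        intro i
        have := neg_abs_le (α i)
        have := hsa i
        simp only [hx]
        linarith
      have hxb : ∀ j, x < β j := by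
        intro j
        have := neg_abs_le (β j)
        have := hsb j
        simp only [hx]
        linarith
      have hx0 : x < 0 := by simp only [hx]; linarith
      obtain ⟨hub, hlb⟩ := limit_bounds m n α β band x
        (fun i => (hxa i).ne') (fun j => (hxb j).ne')
      have ea : (∑ i, if x < α i then π else 0) = (m : ℝ) * π := by
        rw [Finset.sum_congr rfl fun i _ => if_pos (hxa i)]
        simp [Finset.sum_const, mul_comm]
      have eb : (∑ j, if x < β j then π else 0) = (n : ℝ) * π := by
        rw [Finset.sum_congr rfl fun j _ => if_pos (hxb j)]
        simp [Finset.sum_const, mul_comm]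
      rw [ea, eb] at hub
      rw [ea, eb] at hlb
      have h1 : (n : ℝ) * π - (m : ℝ) * π ≤ π := hub
      have h2 : 0 ≤ (n : ℝ) * π - (m : ℝ) * π := hlb hx0
      have hn1 : (n : ℝ) ≤ (m : ℝ) + 1 := by nlinarith
      have hn2 : (m : ℝ) ≤ (n : ℝ) := by nlinarith
      have : n ≤ m + 1 := by exact_mod_cast hn1
      have : m ≤ n := by exact_mod_cast hn2
      omega
    refine ⟨hdeg, ?_, ?_⟩
    · -- α i ≤ β i
      intro i hi
      by_contra hcon
      push_neg at hcon
      have hIoo : (Set.Ioo (β ⟨(i : ℕ), hi⟩) (α i)).Infinite := Set.Ioo_infinite hcon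
      obtain ⟨x, hxIoo, hxF⟩ := hIoo.exists_notMem_finset
        ((Finset.univ.image α) ∪ (Finset.univ.image β))
      have hax : ∀ i', α i' ≠ x := by
        intro i' h
        exact hxF (Finset.mem_union_left _ (Finset.mem_image.mpr ⟨i', Finset.mem_univ _, h⟩))
      have hbx : ∀ j, β j ≠ x := by
        intro j h
        exact hxF (Finset.mem_union_right _ (Finset.mem_image.mpr ⟨j, Finset.mem_univ _, h⟩))
      have hx0 : x < 0 := lt_of_lt_of_le hxIoo.2 (hα0 i)
      obtain ⟨hub, hlb⟩ := limit_bounds m n α β band x hax hbx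
      have hLa : ((i : ℕ) + 1 : ℝ) * π ≤ ∑ i', if x < α i' then π else 0 := by
        have := sum_ind_ge α x (i : ℕ) i.isLt (fun j hj => by
          have : α i ≤ α j := hα (by rwa [Fin.le_def])
          linarith [hxIoo.2])
        convert this using 2 <;> push_cast <;> ring
      have hLb : (∑ j, if x < β j then π else 0) ≤ (i : ℕ) * π :=
        sum_ind_le β x (i : ℕ) (fun j hj => by
          have : β j ≤ β ⟨(i : ℕ), hi⟩ := hβ (by rwa [Fin.le_def])
          linarith [hxIoo.1])
      have := hlb hx0
      nlinarith
    · -- β (i+1) ≤ α i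
      intro i hi
      by_contra hcon
      push_neg at hcon
      have hIoo : (Set.Ioo (α i) (β ⟨(i : ℕ) + 1, hi⟩)).Infinite := Set.Ioo_infinite hcon
      obtain ⟨x, hxIoo, hxF⟩ := hIoo.exists_notMem_finset
        ((Finset.univ.image α) ∪ (Finset.univ.image β))
      have hax : ∀ i', α i' ≠ x := by
        intro i' h
        exact hxF (Finset.mem_union_left _ (Finset.mem_image.mpr ⟨i', Finset.mem_univ _, h⟩))
      have hbx : ∀ j, β j ≠ x := by
        intro j h
        exact hxF (Finset.mem_union_right _ (Finset.mem_image.mpr ⟨j, Finset.mem_univ _, h⟩))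
      obtain ⟨hub, hlb⟩ := limit_bounds m n α β band x hax hbx
      have hLb : ((i : ℕ) + 1 + 1 : ℝ) * π ≤ ∑ j, if x < β j then π else 0 := by
        have := sum_ind_ge β x ((i : ℕ) + 1) hi (fun j hj => by
          have : β ⟨(i : ℕ) + 1, hi⟩ ≤ β j := hβ (by rwa [Fin.le_def])
          linarith [hxIoo.2])
        convert this using 2 <;> push_cast <;> ring
      have hLa : (∑ i', if x < α i' then π else 0) ≤ (i : ℕ) * π :=
        sum_ind_le α x (i : ℕ) (fun j hj => by
          have : α j ≤ α i := hα (by rwa [Fin.le_def])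
          linarith [hxIoo.1])
      nlinarith
  · -- backward direction
    rintro ⟨hdeg, h1, h2⟩ lam mu hlam hmu z hzeq
    by_contra him
    -- key : no roots in upper half plane
    have key : ∀ w : ℂ, 0 < w.im → aeval w ((C lam * X + C mu) * f + g) ≠ 0 := by
      intro w hw heq
      set A := ∑ i, thAng w (α i) with hA
      set B := ∑ j, thAng w (β j) with hB
      have hsum := sumBound m n hdeg (fun i => thAng w (α i)) (fun j => thAng w (β j))
        (fun i => thAng_pos w (α i)) (fun j => thAng_pos w (β j))
        (fun i hi => thAng_mono w hw (h1 i hi))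
        (fun i hi => thAng_mono w hw (h2 i hi))
      have hS1 : 0 ≤ B - A := hsum.1
      have hS2 : B - A ≤ π := by
        rcases hsum with ⟨_, hs2⟩
        by_cases hn : 0 < n
        · rw [dif_pos hn] at hs2
          have := thAng_lt_pi w (β ⟨0, hn⟩)
          exact le_trans hs2 this.le
        · rw [dif_neg hn] at hs2
          linarith
      have hsin : 0 ≤ Real.sin (B - A) := Real.sin_nonneg_of_nonneg_of_le_pi hS1 hS2
      set Rf := ∏ i, ‖w - ((α i : ℝ) : ℂ)‖ with hRf
      set Rg := ∏ j, ‖w - ((β j : ℝ) : ℂ)‖ with hRg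
      have hRf1 : 0 < Rf := abs_prod_pos α w hw.ne'
      have hRg1 : 0 < Rg := abs_prod_pos β w hw.ne'
      have heq2 : ((lam : ℂ) * w + (mu : ℂ)) * (((c * Rf : ℝ) : ℂ) *
            Complex.exp (((A : ℝ)) * Complex.I)) +
          ((c' * Rg : ℝ) : ℂ) * Complex.exp (((B : ℝ)) * Complex.I) = 0 := by
        rw [← heq]
        rw [map_add, map_mul, map_add, map_mul, aeval_X, aeval_C, aeval_C]
        rw [hf, hg, aeval_polar c α w hw, aeval_polar c' β w hw]
        rw [← hA, ← hB, ← hRf, ← hRg]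
        simp only [Complex.coe_algebraMap]
      have heq3 : ((lam : ℂ) * w + (mu : ℂ)) * ((c * Rf : ℝ) : ℂ) =
          - ((c' * Rg : ℝ) : ℂ) * Complex.exp ((((B - A) : ℝ)) * Complex.I) := by
        apply mul_right_cancel₀ (Complex.exp_ne_zero (((A : ℝ)) * Complex.I))
        have e4 : - ((c' * Rg : ℝ) : ℂ) * Complex.exp ((((B - A) : ℝ)) * Complex.I) *
            Complex.exp (((A : ℝ)) * Complex.I) =
            - ((c' * Rg : ℝ) : ℂ) * Complex.exp (((B : ℝ)) * Complex.I) := by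
          rw [mul_assoc, ← Complex.exp_add]
          congr 2
          push_cast
          ring
        rw [e4]
        have := heq2
        linear_combination this - ((c' * Rg : ℝ) : ℂ) * Complex.exp (((B : ℝ)) * Complex.I)
          - ((lam : ℂ) * w + (mu : ℂ)) * (((c * Rf : ℝ) : ℂ) *
            Complex.exp (((A : ℝ)) * Complex.I))
      -- take imaginary parts
      have him1 : (((lam : ℂ) * w + (mu : ℂ)) * ((c * Rf : ℝ) : ℂ)).im =
          (c * Rf) * (lam * w.im) := by
        simp [Complex.mul_im, Complex.add_im, Complex.add_re, Complex.mul_re]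
        ring
      have him2 : (- ((c' * Rg : ℝ) : ℂ) * Complex.exp ((((B - A) : ℝ)) * Complex.I)).im =
          - (c' * Rg) * Real.sin (B - A) := by
        rw [neg_mul, Complex.neg_im, Complex.mul_im, Complex.exp_ofReal_mul_I_re,
          Complex.exp_ofReal_mul_I_im, Complex.ofReal_re, Complex.ofReal_im]
        ring
      have := congrArg Complex.im heq3
      rw [him1, him2] at this
      nlinarith [mul_pos hc hRf1, mul_pos hc' hRg1, mul_pos hlam hw]
    rcases lt_trichotomy z.im 0 with hlt | heq0 | hgt
    · -- use conjugate
      have hconj : aeval ((starRingEnd ℂ) z) ((C lam * X + C mu) * f + g) = 0 := by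
        rw [Polynomial.aeval_conj, hzeq, map_zero]
      exact key _ (by simpa using hlt) hconj
    · exact him heq0
    · exact key z hgt hzeq
end

section
/- For all n ≥ 0 and variables x_1,...,x_n, the elementary symmetric functions satisfy Σ_{k=0}^n (e_k(x)^2 − e_{k-1}(x)·e_{k+1}(x)) = Σ_{k=0}^{⌊n/2⌋} C_k · Σ_{S ⊆ [n], |S|=2k} (Π_{i∈S} x_i)·(Π_{j∉S} (1 + x_j^2)), where C_k = binom(2k,k)/(k+1) is the k-th Catalan number and e_{-1} = e_{n+1} = 0. -/
open Finset

set_option linter.unusedSectionVars false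

variable {ι : Type*} [DecidableEq ι]


noncomputable def eeAux (x : ι → ℝ) (s : Finset ι) (k : ℕ) : ℝ :=
  ∑ S ∈ s.powersetCard k, ∏ i ∈ S, x i

noncomputable def ffAux (x : ι → ℝ) (s : Finset ι) (m : ℕ) : ℝ :=
  ∑ S ∈ s.powersetCard m, (∏ i ∈ S, x i) * ∏ j ∈ s \ S, (1 + x j ^ 2)

lemma eeAux_zero (x : ι → ℝ) (s : Finset ι) : eeAux x s 0 = 1 := by
  simp [eeAux]

lemma ffAux_zero (x : ι → ℝ) (s : Finset ι) : ffAux x s 0 = ∏ j ∈ s, (1 + x j ^ 2) := by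
  simp [ffAux]

lemma eeAux_of_gt (x : ι → ℝ) {s : Finset ι} {k : ℕ} (h : s.card < k) : eeAux x s k = 0 := by
  simp [eeAux, powersetCard_eq_empty.2 h]

lemma ffAux_of_gt (x : ι → ℝ) {s : Finset ι} {m : ℕ} (h : s.card < m) : ffAux x s m = 0 := by
  simp [ffAux, powersetCard_eq_empty.2 h]

lemma aux_disj (a : ι) (s : Finset ι) (ha : a ∉ s) (k : ℕ) :
    Disjoint (s.powersetCard (k+1)) ((s.powersetCard k).image (insert a)) := by
  rw [disjoint_left]
  intro T hT hT'
  obtain ⟨S, hS, rfl⟩ := mem_image.1 hT'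
  exact ha ((mem_powersetCard.1 hT).1 (mem_insert_self a S))

lemma aux_inj (a : ι) (s : Finset ι) (ha : a ∉ s) (k : ℕ) :
    ∀ S ∈ s.powersetCard k, ∀ T ∈ s.powersetCard k, insert a S = insert a T → S = T := by
  intro S hS T hT h
  have haS : a ∉ S := fun h' => ha ((mem_powersetCard.1 hS).1 h')
  have haT : a ∉ T := fun h' => ha ((mem_powersetCard.1 hT).1 h')
  rw [← erase_insert haS, ← erase_insert haT, h]

lemma eeAux_insert (x : ι → ℝ) {a : ι} {s : Finset ι} (ha : a ∉ s) (k : ℕ) :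
    eeAux x (insert a s) (k+1) = eeAux x s (k+1) + x a * eeAux x s k := by
  unfold eeAux
  rw [powersetCard_succ_insert ha, sum_union (aux_disj a s ha k),
    sum_image (aux_inj a s ha k), mul_sum]
  congr 1
  refine sum_congr rfl fun S hS => ?_
  have haS : a ∉ S := fun h' => ha ((mem_powersetCard.1 hS).1 h')
  rw [prod_insert haS]

lemma ffAux_insert (x : ι → ℝ) {a : ι} {s : Finset ι} (ha : a ∉ s) (m : ℕ) :
    ffAux x (insert a s) (m+1) = (1 + x a ^ 2) * ffAux x s (m+1) + x a * ffAux x s m := by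
  unfold ffAux
  rw [powersetCard_succ_insert ha, sum_union (aux_disj a s ha m),
    sum_image (aux_inj a s ha m), mul_sum, mul_sum]
  congr 1
  · refine sum_congr rfl fun S hS => ?_
    have haS : a ∉ S := fun h' => ha ((mem_powersetCard.1 hS).1 h')
    rw [insert_sdiff_of_notMem _ haS, prod_insert (fun h' => ha (mem_sdiff.1 h').1)]
    ring
  · refine sum_congr rfl fun S hS => ?_
    have haS : a ∉ S := fun h' => ha ((mem_powersetCard.1 hS).1 h')
    have hsd : insert a s \ insert a S = s \ S := by
      ext b
      by_cases hb : b = a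
      · subst hb; simp [ha, haS]
      · simp [hb]
    rw [hsd, prod_insert haS]
    ring


noncomputable def bbAux (j k : ℕ) : ℝ :=
  ((2 * k + j).choose k : ℝ) - (if k = 0 then 0 else ((2 * k + j).choose (k - 1) : ℝ))

lemma bbAux_zero (j : ℕ) : bbAux j 0 = 1 := by simp [bbAux]

lemma bbAux_succ (j k : ℕ) :
    bbAux j (k+1) = ((2*k+j+2).choose (k+1) : ℝ) - ((2*k+j+2).choose k : ℝ) := by
  have h : 2*(k+1)+j = 2*k+j+2 := by ring
  simp [bbAux, h]

lemma bbAux_one (k : ℕ) : bbAux 1 k = bbAux 0 (k+1) := by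
  cases k with
  | zero => norm_num [bbAux]
  | succ k =>
    rw [bbAux_succ, bbAux_succ]
    have h1 : (2*(k+1)+0+2).choose (k+2) = (2*k+3).choose (k+1) + (2*k+3).choose (k+2) := by
      rw [show 2*(k+1)+0+2 = 2*k+3+1 from by ring]
      exact Nat.choose_succ_succ' (2*k+3) (k+1)
    have h2 : (2*(k+1)+0+2).choose (k+1) = (2*k+3).choose k + (2*k+3).choose (k+1) := by
      rw [show 2*(k+1)+0+2 = 2*k+3+1 from by ring]
      exact Nat.choose_succ_succ' (2*k+3) k
    have h3 : (2*k+3).choose (k+2) = (2*k+3).choose (k+1) := by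
      rw [show k+2 = 2*k+3 - (k+1) from by omega]
      exact Nat.choose_symm (by omega)
    rw [show 2*k+1+2 = 2*k+3 from by ring, h1, h2, h3]
    push_cast
    ring

lemma bbAux_rec (j k : ℕ) : bbAux (j+1) (k+1) - bbAux j (k+1) = bbAux (j+2) k := by
  cases k with
  | zero =>
    rw [bbAux_succ, bbAux_succ, bbAux_zero]
    norm_num [Nat.choose_one_right]
  | succ k =>
    rw [bbAux_succ, bbAux_succ, bbAux_succ]
    have h1 : (2*(k+1)+(j+1)+2).choose (k+2) =
        (2*k+j+4).choose (k+1) + (2*k+j+4).choose (k+2) := by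
      rw [show 2*(k+1)+(j+1)+2 = 2*k+j+4+1 from by ring]
      exact Nat.choose_succ_succ' (2*k+j+4) (k+1)
    have h2 : (2*(k+1)+(j+1)+2).choose (k+1) =
        (2*k+j+4).choose k + (2*k+j+4).choose (k+1) := by
      rw [show 2*(k+1)+(j+1)+2 = 2*k+j+4+1 from by ring]
      exact Nat.choose_succ_succ' (2*k+j+4) k
    rw [show 2*(k+1)+j+2 = 2*k+j+4 from by ring, show 2*k+(j+2)+2 = 2*k+j+4 from by ring,
      h1, h2]
    push_cast
    ring

lemma bbAux_catalan (k : ℕ) : bbAux 0 k = ((2*k).choose k : ℝ) / (k+1) := by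
  cases k with
  | zero => norm_num [bbAux]
  | succ k =>
    rw [bbAux_succ]
    have h := Nat.choose_succ_right_eq (2*k+2) k
    rw [show 2*k+2 - k = k+2 from by omega] at h
    have h' : ((2*k+2).choose (k+1) : ℝ) * (k+1) = ((2*k+2).choose k : ℝ) * (k+2) := by
      exact_mod_cast congrArg (Nat.cast : ℕ → ℝ) h
    rw [show 2*k+0+2 = 2*k+2 from by ring, show 2*(k+1) = 2*k+2 from by ring]
    have hk : ((k:ℝ)+1+1) ≠ 0 := by positivity
    field_simp
    push_cast
    nlinarith [h']

lemma sum_shift' (g : ℕ → ℝ) (M : ℕ) (h0 : g 0 = 0) :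
    ∑ k ∈ range (M+1), g k = ∑ k ∈ range M, g (k+1) := by
  rw [Finset.sum_range_succ']
  simp [h0]

lemma mainAux (x : ι → ℝ) (s : Finset ι) (j N : ℕ) (hN : s.card + 1 ≤ N) :
    ∑ k ∈ range N, eeAux x s k * (eeAux x s (k+j) - eeAux x s (k+j+2)) =
    ∑ k ∈ range N, bbAux j k * ffAux x s (2*k+j) := by
  induction s using Finset.induction_on generalizing j N with
  | empty =>
    simp only [card_empty] at hN
    rw [Finset.sum_eq_single 0, Finset.sum_eq_single 0]
    · simp only [Nat.zero_add, Nat.mul_zero, bbAux_zero, eeAux_zero, one_mul]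
      rw [eeAux_of_gt x (show (∅ : Finset ι).card < j + 2 by simp)]
      cases j with
      | zero => simp [eeAux_zero, ffAux_zero]
      | succ j => rw [eeAux_of_gt x (by simp), ffAux_of_gt x (by simp)]; ring
    · intro b _ hb
      rw [ffAux_of_gt x (by simp; omega), mul_zero]
    · intro h; exact absurd (mem_range.2 (by omega)) h
    · intro b _ hb
      rw [eeAux_of_gt x (by simp; omega), zero_mul]
    · intro h; exact absurd (mem_range.2 (by omega)) h
  | @insert a s ha ih =>
    rw [card_insert_of_notMem ha] at hN
    obtain ⟨M, rfl⟩ : ∃ M, N = M + 1 := ⟨N - 1, by omega⟩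
    have hM : s.card + 1 ≤ M := by omega
    set t := x a with htdef
    set E : ℕ → ℝ := eeAux x s with hEdef
    set F : ℕ → ℝ := ffAux x s with hFdef
    have hEtop : ∀ k, s.card < k → E k = 0 := fun k h => eeAux_of_gt x h
    have hFtop : ∀ m, s.card < m → F m = 0 := fun m h => ffAux_of_gt x h
    set D : ℕ → ℝ := fun k => if k = 0 then 0 else E (k-1) with hDdef
    set DF : ℕ → ℝ := fun m => if m = 0 then 0 else F (m-1) with hDFdef
    have hD0 : D 0 = 0 := by simp [hDdef]
    have hDs : ∀ k, D (k+1) = E k := fun k => by simp [hDdef]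
    have hDF0 : DF 0 = 0 := by simp [hDFdef]
    have hDFs : ∀ m, DF (m+1) = F m := fun m => by simp [hDFdef]
    have hEnew : ∀ k, eeAux x (insert a s) k = E k + t * D k := by
      intro k
      cases k with
      | zero => rw [eeAux_zero, hD0, mul_zero, hEdef, eeAux_zero, add_zero]
      | succ k => rw [eeAux_insert x ha, hDs]
    have hFnew : ∀ m, ffAux x (insert a s) m = (1 + t^2) * F m + t * DF m := by
      intro m
      cases m with
      | zero =>
        rw [ffAux_zero, hDF0, mul_zero, add_zero, hFdef, ffAux_zero, prod_insert ha]
      | succ m => rw [ffAux_insert x ha, hDFs]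
    have ext1 : ∀ g : ℕ → ℝ, g M = 0 →
        ∑ k ∈ range (M+1), g k = ∑ k ∈ range M, g k := by
      intro g h
      rw [sum_range_succ, h, add_zero]
    have expand : ∑ k ∈ range (M+1), eeAux x (insert a s) k *
          (eeAux x (insert a s) (k+j) - eeAux x (insert a s) (k+j+2)) =
        (∑ k ∈ range (M+1), E k * (E (k+j) - E (k+j+2)))
        + t * (∑ k ∈ range (M+1),
            (E k * (D (k+j) - D (k+j+2)) + D k * (E (k+j) - E (k+j+2))))
        + t^2 * (∑ k ∈ range (M+1), D k * (D (k+j) - D (k+j+2))) := by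
      rw [mul_sum, mul_sum, ← sum_add_distrib, ← sum_add_distrib]
      refine sum_congr rfl fun k _ => ?_
      rw [hEnew, hEnew, hEnew]
      ring
    have expandR : ∑ k ∈ range (M+1), bbAux j k * ffAux x (insert a s) (2*k+j) =
        (1+t^2) * (∑ k ∈ range (M+1), bbAux j k * F (2*k+j))
        + t * (∑ k ∈ range (M+1), bbAux j k * DF (2*k+j)) := by
      rw [mul_sum, mul_sum, ← sum_add_distrib]
      refine sum_congr rfl fun k _ => ?_
      rw [hFnew]
      ring
    have hS3 : ∑ k ∈ range (M+1), D k * (D (k+j) - D (k+j+2)) =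
        ∑ k ∈ range (M+1), E k * (E (k+j) - E (k+j+2)) := by
      rw [sum_shift' _ M (by rw [hD0, zero_mul])]
      rw [ext1 (fun k => E k * (E (k+j) - E (k+j+2)))
        (by simp only [hEtop M (by omega), zero_mul])]
      refine sum_congr rfl fun k _ => ?_
      rw [hDs, show k+1+j = (k+j)+1 from by omega, hDs,
        show k+j+1+2 = (k+j+2)+1 from by omega, hDs]
    have ihj : ∑ k ∈ range (M+1), E k * (E (k+j) - E (k+j+2)) =
        ∑ k ∈ range (M+1), bbAux j k * F (2*k+j) := ih j (M+1) (by omega)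
    have hS2 : ∑ k ∈ range (M+1),
          (E k * (D (k+j) - D (k+j+2)) + D k * (E (k+j) - E (k+j+2))) =
        ∑ k ∈ range (M+1), bbAux j k * DF (2*k+j) := by
      cases j with
      | zero =>
        simp only [Nat.add_zero]
        have l1 : ∑ k ∈ range (M+1), E k * D k = ∑ k ∈ range M, E k * E (k+1) := by
          rw [sum_shift' _ M (by rw [hD0, mul_zero])]
          exact sum_congr rfl fun k _ => by rw [hDs]; ring
        have l2 : ∑ k ∈ range (M+1), E k * D (k+2) = ∑ k ∈ range M, E k * E (k+1) := by
          rw [ext1 (fun k => E k * D (k+2)) (by simp only [hEtop M (by omega), zero_mul])]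
          exact sum_congr rfl fun k _ => by
            rw [show k+2 = (k+1)+1 from by omega, hDs]
        have l3 : ∑ k ∈ range (M+1), D k * (E k - E (k+2)) =
            ∑ k ∈ range M, E k * (E (k+1) - E (k+1+2)) := by
          rw [sum_shift' _ M (by rw [hD0, zero_mul])]
          exact sum_congr rfl fun k _ => by rw [hDs]
        have lhs_eq : ∑ k ∈ range (M+1),
              (E k * (D k - D (k+2)) + D k * (E k - E (k+2))) =
            ∑ k ∈ range (M+1), E k * (E (k+1) - E (k+1+2)) := by
          have split : ∑ k ∈ range (M+1),
                (E k * (D k - D (k+2)) + D k * (E k - E (k+2))) =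
              (∑ k ∈ range (M+1), E k * D k)
              - (∑ k ∈ range (M+1), E k * D (k+2))
              + (∑ k ∈ range (M+1), D k * (E k - E (k+2))) := by
            rw [← sum_sub_distrib, ← sum_add_distrib]
            exact sum_congr rfl fun k _ => by ring
          rw [split, l1, l2, l3, ext1 (fun k => E k * (E (k+1) - E (k+1+2)))
            (by simp only [hEtop M (by omega), zero_mul])]
          ring
        have rhs_eq : ∑ k ∈ range (M+1), bbAux 0 k * DF (2*k) =
            ∑ k ∈ range (M+1), bbAux 1 k * F (2*k+1) := by
          rw [sum_shift' _ M (by norm_num [hDF0]),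
            ext1 (fun k => bbAux 1 k * F (2*k+1))
              (by simp only [hFtop (2*M+1) (by omega), mul_zero])]
          refine sum_congr rfl fun k _ => ?_
          rw [show 2*(k+1) = (2*k+1)+1 from by omega, hDFs, bbAux_one]
        rw [lhs_eq, rhs_eq]
        exact ih 1 (M+1) (by omega)
      | succ j' =>
        simp only [← add_assoc]
        have l4 : ∑ k ∈ range (M+1), E k * (D (k+j'+1) - D (k+j'+1+2)) =
            ∑ k ∈ range (M+1), E k * (E (k+j') - E (k+j'+2)) := by
          refine sum_congr rfl fun k _ => ?_
          rw [hDs, show k+j'+1+2 = (k+j'+2)+1 from by omega, hDs]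
        have l5 : ∑ k ∈ range (M+1), D k * (E (k+j'+1) - E (k+j'+1+2)) =
            ∑ k ∈ range (M+1), E k * (E (k+(j'+2)) - E (k+(j'+2)+2)) := by
          rw [sum_shift' _ M (by rw [hD0, zero_mul]),
            ext1 (fun k => E k * (E (k+(j'+2)) - E (k+(j'+2)+2)))
              (by simp only [hEtop M (by omega), zero_mul])]
          refine sum_congr rfl fun k _ => ?_
          rw [hDs, show k+1+j'+1 = k+(j'+2) from by omega]
        have rhs_eq : ∑ k ∈ range (M+1), bbAux (j'+1) k * DF (2*k+j'+1) =
            (∑ k ∈ range (M+1), bbAux j' k * F (2*k+j'))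
            + ∑ k ∈ range (M+1), bbAux (j'+2) k * F (2*k+(j'+2)) := by
          have step1 : ∑ k ∈ range (M+1), bbAux (j'+1) k * DF (2*k+j'+1) =
              (∑ k ∈ range (M+1), bbAux j' k * F (2*k+j'))
              + ∑ k ∈ range (M+1), (bbAux (j'+1) k - bbAux j' k) * F (2*k+j') := by
            rw [← sum_add_distrib]
            refine sum_congr rfl fun k _ => ?_
            rw [show 2*k+j'+1 = (2*k+j')+1 from rfl, hDFs]
            ring
          have step2 : ∑ k ∈ range (M+1), (bbAux (j'+1) k - bbAux j' k) * F (2*k+j') =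
              ∑ k ∈ range (M+1), bbAux (j'+2) k * F (2*k+(j'+2)) := by
            rw [sum_shift' _ M (by rw [bbAux_zero, bbAux_zero, sub_self, zero_mul]),
              ext1 (fun k => bbAux (j'+2) k * F (2*k+(j'+2)))
                (by simp only [hFtop (2*M+(j'+2)) (by omega), mul_zero])]
            refine sum_congr rfl fun k _ => ?_
            rw [bbAux_rec, show 2*(k+1)+j' = 2*k+(j'+2) from by omega]
          rw [step1, step2]
        calc ∑ k ∈ range (M+1),
              (E k * (D (k+j'+1) - D (k+j'+1+2)) + D k * (E (k+j'+1) - E (k+j'+1+2)))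
            = (∑ k ∈ range (M+1), E k * (E (k+j') - E (k+j'+2)))
              + ∑ k ∈ range (M+1), E k * (E (k+(j'+2)) - E (k+(j'+2)+2)) := by
              rw [← l4, ← l5, sum_add_distrib]
          _ = (∑ k ∈ range (M+1), bbAux j' k * F (2*k+j'))
              + ∑ k ∈ range (M+1), bbAux (j'+2) k * F (2*k+(j'+2)) := by
              rw [ih j' (M+1) (by omega), ih (j'+2) (M+1) (by omega)]
          _ = ∑ k ∈ range (M+1), bbAux (j'+1) k * DF (2*k+j'+1) := rhs_eq.symm
    rw [expand, expandR, hS3, ihj, hS2]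
    ring


theorem esymm_squares_catalan_identity (n : ℕ) (x : Fin n → ℝ) :
    (∑ k ∈ range (n + 1),
        ((∑ S ∈ powersetCard k (univ : Finset (Fin n)), ∏ i ∈ S, x i) ^ 2 -
          (if k = 0 then 0 else
            (∑ S ∈ powersetCard (k - 1) (univ : Finset (Fin n)), ∏ i ∈ S, x i) *
              (∑ S ∈ powersetCard (k + 1) (univ : Finset (Fin n)), ∏ i ∈ S, x i)))) =
      ∑ k ∈ range (n / 2 + 1),
        (((2 * k).choose k : ℝ) / (k + 1)) *
          ∑ S ∈ powersetCard (2 * k) (univ : Finset (Fin n)),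
            (∏ i ∈ S, x i) * ∏ j ∈ Sᶜ, (1 + x j ^ 2) := by
  have hcard : (univ : Finset (Fin n)).card = n := by simp
  have repl : ∀ k, (∑ S ∈ powersetCard k (univ : Finset (Fin n)), ∏ i ∈ S, x i)
      = eeAux x univ k := fun _ => rfl
  have replF : ∀ m, (∑ S ∈ powersetCard m (univ : Finset (Fin n)),
        (∏ i ∈ S, x i) * ∏ j ∈ Sᶜ, (1 + x j ^ 2)) = ffAux x univ m := by
    intro m
    unfold ffAux
    exact sum_congr rfl fun S _ => by rw [compl_eq_univ_sdiff]
  simp only [repl, replF]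
  set E : ℕ → ℝ := eeAux x (univ : Finset (Fin n)) with hEdef
  have h := mainAux x (univ : Finset (Fin n)) 0 (n+1) (by rw [hcard])
  have a1 : ∑ k ∈ range (n+1), (if k = 0 then (0:ℝ) else E (k-1) * E (k+1)) =
      ∑ k ∈ range n, E k * E (k+2) := by
    rw [sum_shift' _ n (by simp)]
    refine sum_congr rfl fun k _ => ?_
    rw [if_neg k.succ_ne_zero, Nat.add_sub_cancel]
  have a2 : ∑ k ∈ range (n+1), E k * E (k+2) = ∑ k ∈ range n, E k * E (k+2) := by
    rw [sum_range_succ, hEdef, eeAux_of_gt x (show (univ : Finset (Fin n)).card < n+2 by rw [hcard]; omega), mul_zero, add_zero]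
  have hL : ∑ k ∈ range (n+1), E k * (E (k+0) - E (k+0+2)) =
      ∑ k ∈ range (n+1), (E k ^ 2 - if k = 0 then (0:ℝ) else E (k-1) * E (k+1)) := by
    simp only [Nat.add_zero]
    calc ∑ k ∈ range (n+1), E k * (E k - E (k+2))
        = ∑ k ∈ range (n+1), E k ^ 2 - ∑ k ∈ range (n+1), E k * E (k+2) := by
          rw [← sum_sub_distrib]
          exact sum_congr rfl fun k _ => by ring
      _ = ∑ k ∈ range (n+1), E k ^ 2 -
          ∑ k ∈ range (n+1), (if k = 0 then (0:ℝ) else E (k-1) * E (k+1)) := by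
          rw [a2, a1]
      _ = ∑ k ∈ range (n+1), (E k ^ 2 - if k = 0 then (0:ℝ) else E (k-1) * E (k+1)) := by
          rw [sum_sub_distrib]
  have hR : ∑ k ∈ range (n/2 + 1), (((2*k).choose k : ℝ) / (k+1)) * ffAux x univ (2*k) =
      ∑ k ∈ range (n+1), bbAux 0 k * ffAux x univ (2*k+0) := by
    have hstep : ∀ k, (((2*k).choose k : ℝ) / (k+1)) * ffAux x univ (2*k) =
        bbAux 0 k * ffAux x univ (2*k+0) := by
      intro k
      rw [bbAux_catalan, Nat.add_zero]
    simp only [hstep]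
    refine Finset.sum_subset (range_subset_range.2 (by omega)) ?_
    intro k hk hk'
    rw [mem_range] at hk hk'
    rw [ffAux_of_gt x (by rw [hcard]; omega), mul_zero]
  rw [← hL, h, ← hR]
end

section
/- For every n ≥ 0, Σ_{k=0}^{⌊n/2⌋} C_k·binom(n,2k)·x^k·(1+x)^{n-2k} = Σ_{k=0}^n (1/(n+1))·binom(n+1,k)·binom(n+1,k+1)·x^k, where C_k = binom(2k,k)/(k+1) is the k-th Catalan number; in particular the coefficients of the Narayana polynomial on the right are the γ-expansion coefficients C_k·binom(n,2k). -/
open Finset Nat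

lemma choose_swap (m p q : ℕ) (h : p + q ≤ m) :
    m.choose p * (m - p).choose q = m.choose q * (m - q).choose p := by
  have h1 := Nat.choose_mul (n := m) (Nat.le_add_right p q)
  have h2 := Nat.choose_mul (n := m) (Nat.le_add_left q p)
  rw [Nat.add_sub_cancel_left] at h1
  rw [Nat.add_sub_cancel] at h2
  rw [← h1, ← h2, Nat.choose_symm_add]

lemma catalan_add (k : ℕ) : catalan k + (2 * k).choose (k + 1) = (2 * k).choose k := by
  have h1 := succ_mul_catalan_eq_centralBinom k
  have h2 : (2 * k).choose (k + 1) * (k + 1) = (2 * k).choose k * (2 * k - k) :=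
    Nat.choose_succ_right_eq (2 * k) k
  have h3 : 2 * k - k = k := by omega
  rw [h3] at h2
  refine Nat.eq_of_mul_eq_mul_left (Nat.succ_pos k) ?_
  rw [Nat.mul_add, h1, Nat.centralBinom]
  nlinarith [h2]

lemma term_id (n j k a : ℕ) (hak : a ≤ k) (hkj : k ≤ j) (hjan : j + a ≤ n) :
    n.choose (2 * k) * (2 * k).choose (k + a) * (n - 2 * k).choose (j - k) =
      n.choose (j + a) * ((j + a).choose (k + a) * (n - j - a).choose (k - a)) := by
  by_cases h2k : 2 * k ≤ n
  · by_cases hjk : j + k ≤ n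
    · -- main case
      have e1 : n.choose (2 * k) * (2 * k).choose (k + a)
          = n.choose (k + a) * (n - (k + a)).choose (k - a) := by
        have h := Nat.choose_mul (n := n) (show k + a ≤ 2 * k by omega)
        have h' : 2 * k - (k + a) = k - a := by omega
        rw [h' ] at h
        exact h
      rw [e1]
      have e2 : (n - (k + a)).choose (k - a) * (n - 2 * k).choose (j - k)
          = (n - (k + a)).choose (j - k) * (n - j - a).choose (k - a) := by
        have hsub : n - 2 * k = (n - (k + a)) - (k - a) := by omega
        have hsub2 : (n - (k + a)) - (j - k) = n - j - a := by omega
        rw [hsub, choose_swap _ _ _ (by omega), hsub2]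
      have e3 : n.choose (k + a) * (n - (k + a)).choose (j - k)
          = n.choose (j + a) * (j + a).choose (k + a) := by
        have h := Nat.choose_mul (n := n) (show k + a ≤ j + a by omega)
        have h' : j + a - (k + a) = j - k := by omega
        rw [h' ] at h
        exact h.symm
      calc n.choose (k + a) * (n - (k + a)).choose (k - a) * (n - 2 * k).choose (j - k)
          = n.choose (k + a) * ((n - (k + a)).choose (k - a) * (n - 2 * k).choose (j - k)) := by ring
        _ = n.choose (k + a) * ((n - (k + a)).choose (j - k) * (n - j - a).choose (k - a)) := by rw [e2]
        _ = n.choose (k + a) * (n - (k + a)).choose (j - k) * (n - j - a).choose (k - a) := by ring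
        _ = n.choose (j + a) * (j + a).choose (k + a) * (n - j - a).choose (k - a) := by rw [e3]
        _ = _ := by ring
    · -- j + k > n : both sides zero
      have l1 : (n - 2 * k).choose (j - k) = 0 := Nat.choose_eq_zero_of_lt (by omega)
      have l2 : (n - j - a).choose (k - a) = 0 := Nat.choose_eq_zero_of_lt (by omega)
      rw [l1, l2]; ring
  · have l1 : n.choose (2 * k) = 0 := Nat.choose_eq_zero_of_lt (by omega)
    have l2 : (n - j - a).choose (k - a) = 0 := Nat.choose_eq_zero_of_lt (by omega)
    rw [l1, l2]; ring

lemma vdm (m q r : ℕ) :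
    (m + q).choose r = ∑ t ∈ range (r + 1), m.choose (r - t) * q.choose t := by
  calc (m + q).choose r = ∑ i ∈ range (r + 1), m.choose i * q.choose (r - i) := by
        rw [Nat.add_choose_eq, Finset.Nat.sum_antidiagonal_eq_sum_range_succ_mk]
    _ = ∑ t ∈ range (r + 1), m.choose (r + 1 - 1 - t) * q.choose (r - (r + 1 - 1 - t)) :=
        (Finset.sum_range_reflect (fun i => m.choose i * q.choose (r - i)) (r + 1)).symm
    _ = ∑ t ∈ range (r + 1), m.choose (r - t) * q.choose t := by
        apply Finset.sum_congr rfl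
        intro t ht
        simp only [Finset.mem_range] at ht
        have h1 : r + 1 - 1 - t = r - t := by omega
        have h2 : r - (r - t) = t := by omega
        rw [h1, h2]

lemma T_eval (n j a : ℕ) (haj : a ≤ j) (hjan : j + a ≤ n) :
    ∑ k ∈ range (j + 1), n.choose (2 * k) * (2 * k).choose (k + a) * (n - 2 * k).choose (j - k)
      = n.choose (j - a) * n.choose (j + a) := by
  -- drop k < a terms
  have hdrop : ∑ k ∈ range (j + 1),
      n.choose (2 * k) * (2 * k).choose (k + a) * (n - 2 * k).choose (j - k)
      = ∑ k ∈ Ico a (j + 1),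
      n.choose (2 * k) * (2 * k).choose (k + a) * (n - 2 * k).choose (j - k) := by
    rw [Finset.range_eq_Ico]
    rw [← Finset.sum_Ico_consecutive _ (Nat.zero_le a) (by omega)]
    have : ∑ k ∈ Ico 0 a,
        n.choose (2 * k) * (2 * k).choose (k + a) * (n - 2 * k).choose (j - k) = 0 := by
      apply Finset.sum_eq_zero
      intro k hk
      simp only [Finset.mem_Ico] at hk
      rw [Nat.choose_eq_zero_of_lt (show 2 * k < k + a by omega)]
      ring
    rw [this, zero_add]
  rw [hdrop]
  rw [Finset.sum_Ico_eq_sum_range]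
  have hlen : j + 1 - a = (j - a) + 1 := by omega
  rw [hlen]
  have hterm : ∀ t ∈ range ((j - a) + 1),
      n.choose (2 * (a + t)) * (2 * (a + t)).choose ((a + t) + a) *
        (n - 2 * (a + t)).choose (j - (a + t))
      = n.choose (j + a) * ((j + a).choose (j - a - t) * (n - j - a).choose t) := by
    intro t ht
    simp only [Finset.mem_range] at ht
    rw [term_id n j (a + t) a (by omega) (by omega) hjan]
    have h1 : (a + t) + a = t + 2 * a := by omega
    have h2 : (a + t) - a = t := by omega
    rw [h1, h2]
    congr 2
    rw [← Nat.choose_symm (show t + 2 * a ≤ j + a by omega)]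
    congr 1
    omega
  rw [Finset.sum_congr rfl hterm, ← Finset.mul_sum]
  have hvdm : n.choose (j - a) = ∑ t ∈ range ((j - a) + 1),
      (j + a).choose (j - a - t) * (n - j - a).choose t := by
    rw [← vdm]
    congr 1
    omega
  rw [hvdm]
  ring

lemma T1_eval (n j : ℕ) (h1 : 1 ≤ j) (hjn : j ≤ n) :
    ∑ k ∈ range (j + 1), n.choose (2 * k) * (2 * k).choose (k + 1) * (n - 2 * k).choose (j - k)
      = n.choose (j - 1) * n.choose (j + 1) := by
  rcases Nat.lt_or_ge n (j + 1) with h | h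
  · have hjn' : j = n := by omega
    subst hjn'
    rw [Nat.choose_eq_zero_of_lt (show j < j + 1 by omega), Nat.mul_zero]
    apply Finset.sum_eq_zero
    intro k hk
    simp only [Finset.mem_range] at hk
    by_cases h2k : 2 * k ≤ j
    · by_cases hk1 : 1 ≤ k
      · rw [Nat.choose_eq_zero_of_lt (show j - 2 * k < j - k by omega)]
        ring
      · have : k = 0 := by omega
        subst this
        simp
    · rw [Nat.choose_eq_zero_of_lt (show j < 2 * k by omega)]
      ring
  · exact T_eval n j 1 h1 h

lemma A_key (n j : ℕ) (h1 : 1 ≤ j) (hjn : j ≤ n) :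
    (∑ k ∈ range (j + 1), catalan k * (n.choose (2 * k) * (n - 2 * k).choose (j - k)))
      + n.choose (j - 1) * n.choose (j + 1) = n.choose j * n.choose j := by
  have h0 := T_eval n j 0 (Nat.zero_le j) (by omega)
  have ht1 := T1_eval n j h1 hjn
  have hsplit : ∀ k, n.choose (2 * k) * (2 * k).choose (k + 0) * (n - 2 * k).choose (j - k)
      = catalan k * (n.choose (2 * k) * (n - 2 * k).choose (j - k))
        + n.choose (2 * k) * (2 * k).choose (k + 1) * (n - 2 * k).choose (j - k) := by
    intro k
    have := catalan_add k
    calc n.choose (2 * k) * (2 * k).choose (k + 0) * (n - 2 * k).choose (j - k)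
        = (catalan k + (2 * k).choose (k + 1)) * (n.choose (2 * k) * (n - 2 * k).choose (j - k)) := by
          rw [this]; ring
      _ = _ := by ring
  rw [Finset.sum_congr rfl (fun k _ => hsplit k), Finset.sum_add_distrib] at h0
  simp only [Nat.add_zero, Nat.sub_zero] at h0
  rw [ht1] at h0
  omega

lemma nara (n j : ℕ) (h1 : 1 ≤ j) (hjn : j ≤ n) :
    ((n : ℝ) + 1) * ((n.choose j : ℝ) * n.choose j - n.choose (j - 1) * n.choose (j + 1))
      = ((n + 1).choose j : ℝ) * (n + 1).choose (j + 1) := by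
  rcases Nat.lt_or_ge n (j + 1) with h | h
  · have : j = n := by omega
    subst this
    rw [Nat.choose_eq_zero_of_lt (show j < j + 1 by omega), Nat.choose_self,
      Nat.choose_succ_self_right, Nat.choose_self]
    push_cast
    ring
  · obtain ⟨p, hp⟩ : ∃ p, j = p + 1 := ⟨j - 1, by omega⟩
    obtain ⟨q, hq⟩ : ∃ q, n = p + 2 + q := ⟨n - j - 1, by omega⟩
    subst hp hq
    have c1 : ((p + 2 + q).choose (p + 1) : ℝ)
        = (p + 2 + q)! / ((p + 1)! * (q + 1)!) := by
      rw [Nat.cast_choose ℝ (by omega), show p + 2 + q - (p + 1) = q + 1 from by omega]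
    have c2 : ((p + 2 + q).choose p : ℝ) = (p + 2 + q)! / (p ! * (q + 2)!) := by
      rw [Nat.cast_choose ℝ (by omega), show p + 2 + q - p = q + 2 from by omega]
    have c3 : ((p + 2 + q).choose (p + 2) : ℝ) = (p + 2 + q)! / ((p + 2)! * q !) := by
      rw [Nat.cast_choose ℝ (by omega), show p + 2 + q - (p + 2) = q from by omega]
    have c4 : ((p + 2 + q + 1).choose (p + 1) : ℝ)
        = (p + 3 + q)! / ((p + 1)! * (q + 2)!) := by
      rw [Nat.cast_choose ℝ (by omega), show p + 2 + q + 1 - (p + 1) = q + 2 from by omega,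
        show p + 2 + q + 1 = p + 3 + q from by omega]
    have c5 : ((p + 2 + q + 1).choose (p + 2) : ℝ)
        = (p + 3 + q)! / ((p + 2)! * (q + 1)!) := by
      rw [Nat.cast_choose ℝ (by omega), show p + 2 + q + 1 - (p + 2) = q + 1 from by omega,
        show p + 2 + q + 1 = p + 3 + q from by omega]
    have e0 : p + 1 + 1 = p + 2 := by omega
    have e1 : p + 2 + q + 1 = p + 3 + q := by omega
    simp only [Nat.add_sub_cancel, e0]
    rw [c1, c2, c3]
    rw [show ((p+2+q+1).choose (p+1) : ℝ) = (p + 3 + q)! / ((p + 1)! * (q + 2)!) from c4,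
        show ((p+2+q+1).choose (p+2) : ℝ) = (p + 3 + q)! / ((p + 2)! * (q + 1)!) from c5]
    have f1 : ((p + 3 + q)! : ℝ) = (p + 3 + q) * (p + 2 + q)! := by
      rw [show p + 3 + q = (p + 2 + q) + 1 by omega, Nat.factorial_succ]; push_cast; ring
    have f2 : ((p + 2)! : ℝ) = (p + 2) * (p + 1)! := by
      rw [show p + 2 = (p + 1) + 1 by omega, Nat.factorial_succ]; push_cast; ring
    have f3 : ((p + 1)! : ℝ) = (p + 1) * p ! := by
      rw [Nat.factorial_succ]; push_cast; ring
    have f4 : ((q + 2)! : ℝ) = (q + 2) * (q + 1)! := by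
      rw [show q + 2 = (q + 1) + 1 by omega, Nat.factorial_succ]; push_cast; ring
    have f5 : ((q + 1)! : ℝ) = (q + 1) * q ! := by
      rw [Nat.factorial_succ]; push_cast; ring
    rw [f1, f2, f4, f3, f5]
    have hp0 : (p ! : ℝ) ≠ 0 := Nat.cast_ne_zero.mpr (Nat.factorial_ne_zero p)
    have hq0 : (q ! : ℝ) ≠ 0 := Nat.cast_ne_zero.mpr (Nat.factorial_ne_zero q)
    have hp1 : (p : ℝ) + 1 ≠ 0 := by positivity
    have hp2 : (p : ℝ) + 2 ≠ 0 := by positivity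
    have hq1 : (q : ℝ) + 1 ≠ 0 := by positivity
    have hq2 : (q : ℝ) + 2 ≠ 0 := by positivity
    field_simp
    push_cast
    ring

lemma Acoef (n j : ℕ) (hjn : j ≤ n) :
    (∑ k ∈ range (j + 1),
        (catalan k : ℝ) * (n.choose (2 * k)) * ((n - 2 * k).choose (j - k)))
      = (1 / ((n : ℝ) + 1)) * ((n + 1).choose j) * ((n + 1).choose (j + 1)) := by
  have hn1 : ((n : ℝ) + 1) ≠ 0 := by positivity
  rcases Nat.eq_zero_or_pos j with h0 | h1
  · subst h0
    simp [Nat.choose_one_right]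
    field_simp
  · have hkey := A_key n j h1 hjn
    have hnara := nara n j h1 hjn
    have hc := congrArg (fun m : ℕ => (m : ℝ)) hkey
    push_cast at hc
    have hre : (∑ k ∈ range (j + 1),
        (catalan k : ℝ) * (n.choose (2 * k)) * ((n - 2 * k).choose (j - k)))
        = ∑ k ∈ range (j + 1),
        (catalan k : ℝ) * ((n.choose (2 * k)) * ((n - 2 * k).choose (j - k))) :=
      Finset.sum_congr rfl (fun k _ => by ring)
    have hS : (∑ k ∈ range (j + 1),
        (catalan k : ℝ) * (n.choose (2 * k)) * ((n - 2 * k).choose (j - k)))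
        = (n.choose j : ℝ) * n.choose j - n.choose (j - 1) * n.choose (j + 1) := by
      rw [hre]; linarith [hc]
    rw [hS]
    field_simp
    linarith [hnara]

lemma row (n k : ℕ) (x : ℝ) :
    (catalan k : ℝ) * (n.choose (2 * k)) * x ^ k * (x + 1) ^ (n - 2 * k)
      = ∑ i ∈ range (n + 1 - k),
          (catalan k : ℝ) * (n.choose (2 * k)) * ((n - 2 * k).choose i) * x ^ (k + i) := by
  by_cases h : 2 * k ≤ n
  · rw [add_pow]
    simp only [one_pow, mul_one]
    rw [Finset.mul_sum]
    have hstep : ∀ i ∈ range (n - 2 * k + 1),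
        (catalan k : ℝ) * (n.choose (2 * k)) * x ^ k * (x ^ i * ((n - 2 * k).choose i))
        = (catalan k : ℝ) * (n.choose (2 * k)) * ((n - 2 * k).choose i) * x ^ (k + i) := by
      intro i _
      rw [pow_add]
      ring
    rw [Finset.sum_congr rfl hstep]
    apply Finset.sum_subset
    · intro i hi
      simp only [Finset.mem_range] at hi ⊢
      omega
    · intro i hi hi'
      simp only [Finset.mem_range] at hi hi'
      rw [Nat.choose_eq_zero_of_lt (show n - 2 * k < i by omega)]
      ring
  · rw [Nat.choose_eq_zero_of_lt (show n < 2 * k by omega)]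
    push_cast
    rw [Finset.sum_eq_zero]
    · ring
    · intro i _
      ring

theorem catalan_gamma_narayana_identity (n : ℕ) (x : ℝ) :
    ∑ k ∈ Finset.range (n / 2 + 1),
        (((2 * k).choose k : ℝ) / (k + 1)) * (n.choose (2 * k)) *
          x ^ k * (1 + x) ^ (n - 2 * k) =
      ∑ k ∈ Finset.range (n + 1),
        (1 / (n + 1 : ℝ)) * ((n + 1).choose k) * ((n + 1).choose (k + 1)) * x ^ k := by
  have hcoef : ∀ k : ℕ, (((2 * k).choose k : ℝ) / (k + 1)) = (catalan k : ℝ) := by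
    intro k
    have h := succ_mul_catalan_eq_centralBinom k
    have h2 : ((2 * k).choose k : ℝ) = ((k : ℝ) + 1) * catalan k := by
      have : (2 * k).choose k = (k + 1) * catalan k := h.symm
      rw [this]
      push_cast
      ring
    rw [h2]
    have : ((k : ℝ) + 1) ≠ 0 := by positivity
    field_simp
  calc ∑ k ∈ Finset.range (n / 2 + 1),
        (((2 * k).choose k : ℝ) / (k + 1)) * (n.choose (2 * k)) *
          x ^ k * (1 + x) ^ (n - 2 * k)
      = ∑ k ∈ Finset.range (n / 2 + 1),
        (catalan k : ℝ) * (n.choose (2 * k)) * x ^ k * (x + 1) ^ (n - 2 * k) :=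
        Finset.sum_congr rfl (fun k _ => by rw [hcoef k, add_comm (1 : ℝ) x])
    _ = ∑ k ∈ Finset.range (n + 1),
        (catalan k : ℝ) * (n.choose (2 * k)) * x ^ k * (x + 1) ^ (n - 2 * k) := by
        apply Finset.sum_subset
        · intro k hk
          simp only [Finset.mem_range] at hk ⊢
          omega
        · intro k hk hk'
          simp only [Finset.mem_range] at hk hk'
          rw [Nat.choose_eq_zero_of_lt (show n < 2 * k by omega)]
          push_cast
          ring
    _ = ∑ k ∈ Finset.range (n + 1), ∑ i ∈ range (n + 1 - k),
          (catalan k : ℝ) * (n.choose (2 * k)) * ((n - 2 * k).choose i) * x ^ (k + i) :=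
        Finset.sum_congr rfl (fun k _ => row n k x)
    _ = ∑ j ∈ Finset.range (n + 1), ∑ k ∈ range (j + 1),
          (catalan k : ℝ) * (n.choose (2 * k)) * ((n - 2 * k).choose (j - k)) * x ^ j := by
        rw [Finset.sum_sigma']
        conv_rhs => rw [Finset.sum_sigma']
        apply Finset.sum_nbij' (i := fun p => (⟨p.1 + p.2, p.1⟩ : (_ : ℕ) × ℕ))
          (j := fun p => (⟨p.2, p.1 - p.2⟩ : (_ : ℕ) × ℕ))
        · intro a ha
          simp only [Finset.mem_sigma, Finset.mem_range] at ha ⊢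
          omega
        · intro a ha
          simp only [Finset.mem_sigma, Finset.mem_range] at ha ⊢
          omega
        · intro a ha
          simp only [Finset.mem_sigma, Finset.mem_range] at ha
          simp only [Nat.add_sub_cancel_left]
        · intro a ha
          simp only [Finset.mem_sigma, Finset.mem_range] at ha
          have : a.2 + (a.1 - a.2) = a.1 := by omega
          simp only [this]
        · intro a ha
          simp only [Finset.mem_sigma, Finset.mem_range] at ha
          simp only [Nat.add_sub_cancel_left]
    _ = ∑ k ∈ Finset.range (n + 1),
        (1 / (n + 1 : ℝ)) * ((n + 1).choose k) * ((n + 1).choose (k + 1)) * x ^ k := by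
        apply Finset.sum_congr rfl
        intro j hj
        simp only [Finset.mem_range] at hj
        rw [← Finset.sum_mul, Acoef n j (by omega)]
end
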